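/- arXiv:2110.08876 — 4 statements merged into one kernel-verified Lean document; each statement's English description precedes it below -/
import Mathlib

section
/- Let s ≥ 2 and n_0 ≥ 1 be integers. For each j ∈ [s] let A_j be a finite set partitioned into nonempty blocks T_{1,j}, …, T_{n_0,j} with |T_{i,j}| = t_{i,j}. Then the number of MultiTree-inducing matchings M ⊆ A_1 × ⋯ × A_s equals (n_0!)^{s-1} · ∏_{i=1}^{n_0} ∏_{j=1}^{s} t_{i,j}. -/
/-- `M` is a MultiTree-inducing matching for the block system `T`:
`M` is a set of `n₀` tuples in `A₁ × ⋯ × A_s` (where `A_j = ⋃ i, T i j`), and for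
every coordinate `j` and every block index `i` exactly one element of `M` has its
`j`-th coordinate in the block `T i j`. -/
def IsMTIM {α : Type*} [DecidableEq α] {s n₀ : ℕ}
    (T : Fin n₀ → Fin s → Finset α) (M : Finset (Fin s → α)) : Prop :=
  M.card = n₀ ∧
    (∀ x ∈ M, ∀ j : Fin s, ∃ i : Fin n₀, x j ∈ T i j) ∧
    ∀ j : Fin s, ∀ i : Fin n₀, ∃! x, x ∈ M ∧ x j ∈ T i j

section Aux

open Finset

variable {α : Type*} [Fintype α] [DecidableEq α] {s' n₀ : ℕ}

/-- Functions on `Fin (s'+1)` with prescribed value at `0` correspond to functions on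
`Fin s'`. -/
def fixZeroEquiv {β : Type*} (b : β) :
    {f : Fin (s' + 1) → β // f 0 = b} ≃ (Fin s' → β) where
  toFun f k := f.1 k.succ
  invFun g := ⟨Fin.cons b g, by simp⟩
  left_inv f := Subtype.ext <| funext fun k =>
    Fin.cases (by simp [f.2]) (fun k => by simp) k
  right_inv g := funext fun k => by simp

variable (T : Fin n₀ → Fin (s' + 1) → Finset α)

theorem block_eq (hdisj : ∀ j : Fin (s'+1), ∀ i i' : Fin n₀, i ≠ i' → Disjoint (T i j) (T i' j))
    {j : Fin (s'+1)} {i i' : Fin n₀} {a : α} (h : a ∈ T i j) (h' : a ∈ T i' j) : i = i' := by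
  by_contra hne
  exact Finset.disjoint_left.mp (hdisj j i i' hne) h h'

/-- Parameter space for MTIMs: a family of permutations (normalized at coordinate `0`)
together with a choice of element in each block. -/
abbrev MTIMParam : Type _ :=
  Σ σ : {σ : Fin (s' + 1) → Equiv.Perm (Fin n₀) // σ 0 = 1},
    ∀ i : Fin n₀, ∀ j : Fin (s' + 1), {a : α // a ∈ T (σ.1 j i) j}

/-- The matching associated to a parameter. -/
def MTIMmap (p : MTIMParam T) : Finset (Fin (s' + 1) → α) :=
  Finset.image (fun i j => (p.2 i j : α)) Finset.univ

theorem coe_mem_of_eq {S S' : Finset α} (h : S = S') (x : {a : α // a ∈ S}) :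
    (x : α) ∈ S' := h ▸ x.2

theorem mem_zero (p : MTIMParam T) (i : Fin n₀) : (p.2 i 0 : α) ∈ T i 0 :=
  coe_mem_of_eq (by rw [p.1.2]; simp) (p.2 i 0)

theorem tuple_inj (hdisj : ∀ j : Fin (s'+1), ∀ i i' : Fin n₀, i ≠ i' → Disjoint (T i j) (T i' j))
    (p : MTIMParam T) : Function.Injective (fun i j => (p.2 i j : α)) := by
  intro i i' h
  have h0 := mem_zero T p i
  have h0' := mem_zero T p i'
  have hc : (p.2 i 0 : α) = (p.2 i' 0 : α) := congrFun h 0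
  rw [← hc] at h0'
  exact block_eq T hdisj h0 h0'

theorem isMTIM_MTIMmap
    (hdisj : ∀ j : Fin (s'+1), ∀ i i' : Fin n₀, i ≠ i' → Disjoint (T i j) (T i' j))
    (p : MTIMParam T) : IsMTIM T (MTIMmap T p) := by
  have hinj := tuple_inj T hdisj p
  refine ⟨?_, ?_, ?_⟩
  · rw [MTIMmap, Finset.card_image_of_injective _ hinj, Finset.card_univ, Fintype.card_fin]
  · intro x hx j
    obtain ⟨i, -, rfl⟩ := Finset.mem_image.mp hx
    exact ⟨p.1.1 j i, (p.2 i j).2⟩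
  · intro j i
    refine ⟨fun j' => (p.2 ((p.1.1 j)⁻¹ i) j' : α), ⟨?_, ?_⟩, ?_⟩
    · exact Finset.mem_image_of_mem _ (Finset.mem_univ _)
    · show (p.2 ((p.1.1 j)⁻¹ i) j : α) ∈ T i j
      exact coe_mem_of_eq (by simp) (p.2 _ j)
    · rintro y ⟨hy, hyT⟩
      obtain ⟨i', -, rfl⟩ := Finset.mem_image.mp hy
      have hyT' : (p.2 i' j : α) ∈ T i j := hyT
      have hi' : p.1.1 j i' = i := block_eq T hdisj (p.2 i' j).2 hyT'
      have hieq : i' = (p.1.1 j)⁻¹ i := by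
        rw [← hi']
        simp
      exact congrArg (fun k => fun j' => (p.2 k j' : α)) hieq

theorem MTIMmap_inj
    (hdisj : ∀ j : Fin (s'+1), ∀ i i' : Fin n₀, i ≠ i' → Disjoint (T i j) (T i' j)) :
    Function.Injective (MTIMmap T) := by
  rintro ⟨σp, ap⟩ ⟨σq, aq⟩ h
  have hf : ∀ i j, ((⟨σp, ap⟩ : MTIMParam T).2 i j : α) = ((⟨σq, aq⟩ : MTIMParam T).2 i j : α) := by
    intro i j
    have hmem : (fun j => (ap i j : α)) ∈ MTIMmap T ⟨σq, aq⟩ :=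
      h ▸ Finset.mem_image_of_mem _ (Finset.mem_univ i)
    obtain ⟨i', -, hi'⟩ := Finset.mem_image.mp hmem
    have h0p : (ap i 0 : α) ∈ T i 0 := mem_zero T ⟨σp, ap⟩ i
    have h0q : (aq i' 0 : α) ∈ T i' 0 := mem_zero T ⟨σq, aq⟩ i'
    have e0 : (aq i' 0 : α) = (ap i 0 : α) := congrFun hi' 0
    have hii : i' = i := block_eq T hdisj h0q (by rw [e0]; exact h0p)
    subst hii
    exact (congrFun hi' j).symm
  have hσ : σp = σq := by
    apply Subtype.ext
    funext j
    apply Equiv.ext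
    intro i
    exact block_eq T hdisj (ap i j).2 (hf i j ▸ (aq i j).2)
  subst hσ
  have : ap = aq := by
    funext i j
    exact Subtype.ext (hf i j)
  rw [this]

theorem MTIMmap_surj
    (hdisj : ∀ j : Fin (s'+1), ∀ i i' : Fin n₀, i ≠ i' → Disjoint (T i j) (T i' j))
    {M : Finset (Fin (s'+1) → α)} (hM : IsMTIM T M) : ∃ p, MTIMmap T p = M := by
  classical
  obtain ⟨hcard, hmem, huniq⟩ := hM
  choose f hfM hfT using fun i => (huniq 0 i).exists
  choose g hg using fun i j => hmem (f i) (hfM i) j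
  have hfinj : Function.Injective f := by
    intro i i' h
    exact block_eq T hdisj (hfT i) (h ▸ hfT i')
  have hginj : ∀ j, Function.Injective (fun i => g i j) := by
    intro j i i' h
    have hgg : g i j = g i' j := h
    refine hfinj ((huniq j (g i' j)).unique ⟨hfM i, ?_⟩ ⟨hfM i', hg i' j⟩)
    rw [← hgg]
    exact hg i j
  let σ : Fin (s' + 1) → Equiv.Perm (Fin n₀) := fun j =>
    Equiv.ofBijective _ (Finite.injective_iff_bijective.mp (hginj j))
  have hσ0 : σ 0 = 1 := by
    apply Equiv.ext
    intro i
    show g i 0 = i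
    exact block_eq T hdisj (hg i 0) (hfT i)
  refine ⟨⟨⟨σ, hσ0⟩, fun i j => ⟨f i j, hg i j⟩⟩, ?_⟩
  have heq : MTIMmap T ⟨⟨σ, hσ0⟩, fun i j => ⟨f i j, hg i j⟩⟩ = Finset.image f Finset.univ := rfl
  rw [heq]
  apply Finset.eq_of_subset_of_card_le
  · intro x hx
    obtain ⟨i, -, rfl⟩ := Finset.mem_image.mp hx
    exact hfM i
  · rw [hcard, Finset.card_image_of_injective _ hfinj, Finset.card_univ, Fintype.card_fin]

theorem card_MTIM
    (hdisj : ∀ j : Fin (s'+1), ∀ i i' : Fin n₀, i ≠ i' → Disjoint (T i j) (T i' j)) :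
    Nat.card {M : Finset (Fin (s'+1) → α) // IsMTIM T M}
      = (Nat.factorial n₀) ^ s' * ∏ i : Fin n₀, ∏ j : Fin (s'+1), (T i j).card := by
  classical
  have hb : Function.Bijective
      (fun p : MTIMParam T => (⟨MTIMmap T p, isMTIM_MTIMmap T hdisj p⟩ :
        {M : Finset (Fin (s'+1) → α) // IsMTIM T M})) := by
    constructor
    · intro p q h
      exact MTIMmap_inj T hdisj (congrArg Subtype.val h)
    · rintro ⟨M, hM⟩
      obtain ⟨p, hp⟩ := MTIMmap_surj T hdisj hM
      exact ⟨p, Subtype.ext hp⟩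
  rw [← Nat.card_eq_of_bijective _ hb, Nat.card_eq_fintype_card]
  have h1 : Fintype.card (MTIMParam T) =
      ∑ σ : {σ : Fin (s' + 1) → Equiv.Perm (Fin n₀) // σ 0 = 1},
        ∏ i : Fin n₀, ∏ j : Fin (s'+1), (T (σ.1 j i) j).card := by
    rw [Fintype.card_sigma]
    refine Finset.sum_congr rfl fun σ _ => ?_
    rw [Fintype.card_pi]
    refine Finset.prod_congr rfl fun i _ => ?_
    rw [Fintype.card_pi]
    refine Finset.prod_congr rfl fun j _ => ?_
    exact Fintype.card_coe _
  rw [h1]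
  have h2 : ∀ σ : {σ : Fin (s' + 1) → Equiv.Perm (Fin n₀) // σ 0 = 1},
      (∏ i : Fin n₀, ∏ j : Fin (s'+1), (T (σ.1 j i) j).card)
        = ∏ i : Fin n₀, ∏ j : Fin (s'+1), (T i j).card := by
    intro σ
    rw [Finset.prod_comm]
    conv_rhs => rw [Finset.prod_comm]
    refine Finset.prod_congr rfl fun j _ => ?_
    exact Equiv.prod_comp (σ.1 j) (fun i => (T i j).card)
  rw [Finset.sum_congr rfl fun σ _ => h2 σ, Finset.sum_const, Finset.card_univ,
    smul_eq_mul]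
  congr 1
  rw [Fintype.card_congr (fixZeroEquiv (1 : Equiv.Perm (Fin n₀))), Fintype.card_fun,
    Fintype.card_perm, Fintype.card_fin, Fintype.card_fin]

end Aux

/-- **Counting MultiTree-inducing matchings.** Let `s ≥ 2`, `n₀ ≥ 1`, and for each
`j ∈ [s]` let `A_j` be partitioned into nonempty blocks `T 1 j, …, T n₀ j`. Then the
number of MultiTree-inducing matchings `M ⊆ A₁ × ⋯ × A_s` is
`(n₀!)^(s-1) · ∏_{i,j} |T i j|`. -/
theorem count_MTIM {α : Type*} [Fintype α] [DecidableEq α]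
    (s n₀ : ℕ) (hs : 2 ≤ s) (hn₀ : 1 ≤ n₀)
    (T : Fin n₀ → Fin s → Finset α)
    (hne : ∀ i j, (T i j).Nonempty)
    (hdisj : ∀ j : Fin s, ∀ i i' : Fin n₀, i ≠ i' → Disjoint (T i j) (T i' j)) :
    Set.ncard {M : Finset (Fin s → α) | IsMTIM T M} =
      (Nat.factorial n₀) ^ (s - 1) * ∏ i : Fin n₀, ∏ j : Fin s, (T i j).card := by
  classical
  obtain ⟨s', rfl⟩ : ∃ s', s = s' + 1 := ⟨s - 1, by omega⟩
  rw [← Nat.card_coe_set_eq, Nat.add_sub_cancel]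
  exact card_MTIM T hdisj
end

section
/- Let s ≥ 2 and n_0 ≥ 1 be integers. For each j ∈ [s] let A_j be a finite set partitioned into nonempty blocks T_{1,j}, …, T_{n_0,j} with |T_{i,j}| = t_{i,j}. Let S ⊆ A_1 × ⋯ × A_s be a set with |S| = k that is contained in at least one MultiTree-inducing matching. Then the number of MultiTree-inducing matchings M with S ⊆ M equals ((n_0 − k)!)^{s-1} · ∏ t_{i,j}, where the product runs over all pairs (i, j) ∈ [n_0] × [s] such that no element of S has its j-th coordinate in T_{i,j}. -/
namespace MTIMaux

open Classical

variable {α : Type*} [Fintype α] [DecidableEq α] {s n₀ : ℕ}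

/-- The block indices at coordinate `j` not hit by any element of `S`. -/
noncomputable def mFree (T : Fin n₀ → Fin s → Finset α) (S : Finset (Fin s → α)) (j : Fin s) :
    Finset (Fin n₀) :=
  Finset.univ.filter fun i => ∀ x ∈ S, x j ∉ T i j

lemma mem_mFree {T : Fin n₀ → Fin s → Finset α} {S : Finset (Fin s → α)} {j : Fin s}
    {i : Fin n₀} : i ∈ mFree T S j ↔ ∀ x ∈ S, x j ∉ T i j := by
  simp [mFree]

/-- The condition on the `j`-th coordinates of the new elements (indexed by their
`j₀`-block) extending `S` to a matching. -/
noncomputable def mGood (T : Fin n₀ → Fin s → Finset α) (S : Finset (Fin s → α)) (j₀ j : Fin s)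
    (g : {i // i ∈ mFree T S j₀} → α) : Prop :=
  if j = j₀ then ∀ i, g i ∈ T i.1 j₀
  else (∀ i, ∃ i' ∈ mFree T S j, g i ∈ T i' j) ∧ ∀ i' ∈ mFree T S j, ∃! i, g i ∈ T i' j

lemma block_unique {T : Fin n₀ → Fin s → Finset α}
    (hdisj : ∀ j : Fin s, ∀ i i' : Fin n₀, i ≠ i' → Disjoint (T i j) (T i' j))
    {j : Fin s} {i i' : Fin n₀} {a : α} (h : a ∈ T i j) (h' : a ∈ T i' j) : i = i' := by
  by_contra hne
  exact (Finset.disjoint_left.mp (hdisj j i i' hne) h) h'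

lemma card_mFree_add (T : Fin n₀ → Fin s → Finset α) (S : Finset (Fin s → α))
    (hdisj : ∀ j : Fin s, ∀ i i' : Fin n₀, i ≠ i' → Disjoint (T i j) (T i' j))
    (hSblk : ∀ x ∈ S, ∀ j, ∃ i, x j ∈ T i j)
    (hSinj : ∀ (j : Fin s) (i : Fin n₀), ∀ x ∈ S, ∀ y ∈ S,
      x j ∈ T i j → y j ∈ T i j → x = y)
    (j : Fin s) : (mFree T S j).card + S.card = n₀ := by
  have hsplit := Finset.card_filter_add_card_filter_not
    (s := (Finset.univ : Finset (Fin n₀))) (fun i => ∀ x ∈ S, x j ∉ T i j)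
  have hocc : (Finset.univ.filter fun i : Fin n₀ => ¬ ∀ x ∈ S, x j ∉ T i j).card = S.card := by
    symm
    refine Finset.card_bij (fun x hx => (hSblk x hx j).choose) ?_ ?_ ?_
    · intro x hx
      simp only [Finset.mem_filter, Finset.mem_univ, true_and]
      push_neg
      exact ⟨x, hx, (hSblk x hx j).choose_spec⟩
    · intro x hx y hy hxy
      have h2 := (hSblk y hy j).choose_spec
      rw [← hxy] at h2
      exact hSinj j _ x hx y hy (hSblk x hx j).choose_spec h2
    · intro b hb
      simp only [Finset.mem_filter, Finset.mem_univ, true_and] at hb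
      push_neg at hb
      obtain ⟨x, hx, hxb⟩ := hb
      exact ⟨x, hx, block_unique hdisj (hSblk x hx j).choose_spec hxb⟩
  have h1 : (mFree T S j).card
      = (Finset.filter (fun i => ∀ x ∈ S, x j ∉ T i j) Finset.univ).card := rfl
  have h2 : (Finset.univ : Finset (Fin n₀)).card = n₀ := by simp
  rw [h1, ← hocc, hsplit, h2]

lemma card_good_self (T : Fin n₀ → Fin s → Finset α) (S : Finset (Fin s → α)) (j₀ : Fin s) :
    Nat.card {g : {i // i ∈ mFree T S j₀} → α // mGood T S j₀ j₀ g}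
      = ∏ i ∈ mFree T S j₀, (T i j₀).card := by
  rw [Nat.card_eq_fintype_card, Fintype.card_subtype]
  have h : (Finset.univ.filter fun g : {i // i ∈ mFree T S j₀} → α => mGood T S j₀ j₀ g)
      = Fintype.piFinset (fun i : {i // i ∈ mFree T S j₀} => T i.1 j₀) := by
    ext g
    simp [mGood, Fintype.mem_piFinset]
  rw [h, Fintype.card_piFinset, ← Finset.prod_coe_sort (mFree T S j₀) (fun i => (T i j₀).card)]

lemma card_good_ne (T : Fin n₀ → Fin s → Finset α) (S : Finset (Fin s → α)) (j₀ j : Fin s)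
    (hj : j ≠ j₀)
    (hdisj : ∀ j : Fin s, ∀ i i' : Fin n₀, i ≠ i' → Disjoint (T i j) (T i' j))
    (hcard : (mFree T S j).card = (mFree T S j₀).card) :
    Nat.card {g : {i // i ∈ mFree T S j₀} → α // mGood T S j₀ j g}
      = (mFree T S j₀).card.factorial * ∏ i ∈ mFree T S j, (T i j).card := by
  classical
  have hcardIJ : Fintype.card {i // i ∈ mFree T S j₀} = Fintype.card {i // i ∈ mFree T S j} := by
    simp [Fintype.card_coe, hcard]
  rw [Nat.card_eq_fintype_card, Fintype.card_subtype]
  have key : (Finset.univ.filter fun g : {i // i ∈ mFree T S j₀} → α => mGood T S j₀ j g)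
      = Finset.univ.biUnion (fun τ : {i // i ∈ mFree T S j₀} ≃ {i // i ∈ mFree T S j} =>
          Fintype.piFinset (fun i => T (τ i).1 j)) := by
    ext g
    simp only [Finset.mem_filter, Finset.mem_univ, true_and, Finset.mem_biUnion,
      Fintype.mem_piFinset]
    constructor
    · intro hg
      rw [mGood, if_neg hj] at hg
      obtain ⟨htot, huniq⟩ := hg
      have hchoose : ∀ i : {i // i ∈ mFree T S j₀},
          ∃ i' : {i // i ∈ mFree T S j}, g i ∈ T i'.1 j := by
        intro i
        obtain ⟨i', hi', hmem⟩ := htot i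
        exact ⟨⟨i', hi'⟩, hmem⟩
      choose f hf using hchoose
      have hfinj : Function.Injective f := by
        intro i1 i2 h12
        obtain ⟨i, hmem, hun⟩ := huniq (f i1).1 (f i1).2
        rw [hun i1 (hf i1), hun i2 (h12 ▸ hf i2)]
      have hfbij : Function.Bijective f :=
        (Fintype.bijective_iff_injective_and_card f).mpr ⟨hfinj, hcardIJ⟩
      exact ⟨Equiv.ofBijective f hfbij, hf⟩
    · rintro ⟨τ, hτ⟩
      rw [mGood, if_neg hj]
      constructor
      · exact fun i => ⟨(τ i).1, (τ i).2, hτ i⟩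
      · intro i' hi'
        refine ⟨τ.symm ⟨i', hi'⟩, ?_, ?_⟩
        · have := hτ (τ.symm ⟨i', hi'⟩)
          rwa [Equiv.apply_symm_apply] at this
        · intro i2 hi2
          have h2 : (τ i2).1 = i' := block_unique hdisj (hτ i2) hi2
          have : τ i2 = ⟨i', hi'⟩ := Subtype.ext h2
          rw [← this, Equiv.symm_apply_apply]
  rw [key, Finset.card_biUnion]
  · have hconst : ∀ τ : {i // i ∈ mFree T S j₀} ≃ {i // i ∈ mFree T S j},
        (Fintype.piFinset (fun i => T (τ i).1 j)).card
          = ∏ i ∈ mFree T S j, (T i j).card := by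
      intro τ
      rw [Fintype.card_piFinset]
      rw [← Finset.prod_coe_sort (mFree T S j) (fun i => (T i j).card)]
      exact Equiv.prod_comp τ (fun i' : {i // i ∈ mFree T S j} => (T i'.1 j).card)
    rw [Finset.sum_congr rfl (fun τ _ => hconst τ), Finset.sum_const, Finset.card_univ,
      Fintype.card_equiv (Fintype.equivOfCardEq hcardIJ), Fintype.card_coe, smul_eq_mul]
  · intro τ1 _ τ2 _ hne
    rw [Function.onFun, Finset.disjoint_left]
    intro g hg1 hg2
    rw [Fintype.mem_piFinset] at hg1 hg2
    apply hne
    ext i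
    exact congrArg Fin.val (block_unique hdisj (hg1 i) (hg2 i))

lemma buildM_spec (T : Fin n₀ → Fin s → Finset α) (S : Finset (Fin s → α)) (j₀ : Fin s)
    (hdisj : ∀ j : Fin s, ∀ i i' : Fin n₀, i ≠ i' → Disjoint (T i j) (T i' j))
    (hSblk : ∀ x ∈ S, ∀ j, ∃ i, x j ∈ T i j)
    (hSinj : ∀ (j : Fin s) (i : Fin n₀), ∀ x ∈ S, ∀ y ∈ S,
      x j ∈ T i j → y j ∈ T i j → x = y)
    (hn : (mFree T S j₀).card + S.card = n₀)
    (G : ∀ j : Fin s, {g : {i // i ∈ mFree T S j₀} → α // mGood T S j₀ j g}) :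
    IsMTIM T (S ∪ (mFree T S j₀).attach.image (fun i j => (G j).1 i)) ∧
      S ⊆ S ∪ (mFree T S j₀).attach.image (fun i j => (G j).1 i) := by
  have hgood0 : ∀ i, (G j₀).1 i ∈ T i.1 j₀ := by
    have h := (G j₀).2; rwa [mGood, if_pos rfl] at h
  have hgoodne : ∀ j, j ≠ j₀ → ((∀ i, ∃ i' ∈ mFree T S j, (G j).1 i ∈ T i' j) ∧
      ∀ i' ∈ mFree T S j, ∃! i, (G j).1 i ∈ T i' j) := by
    intro j hj; have h := (G j).2; rwa [mGood, if_neg hj] at h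
  set N := (mFree T S j₀).attach.image (fun i j => (G j).1 i) with hN
  have hmemN : ∀ x, x ∈ N ↔ ∃ i, (fun j => (G j).1 i) = x := by
    intro x; simp [hN]
  have hnotS : ∀ i : {i // i ∈ mFree T S j₀}, (fun j => (G j).1 i) ∉ S := by
    intro i hin
    exact mem_mFree.mp i.2 _ hin (hgood0 i)
  have hinj : Function.Injective
      (fun (i : {i // i ∈ mFree T S j₀}) (j : Fin s) => (G j).1 i) := by
    intro i1 i2 h
    have h0 : (G j₀).1 i1 = (G j₀).1 i2 := congrFun h j₀
    refine Subtype.ext (block_unique hdisj (hgood0 i1) ?_)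
    rw [h0]; exact hgood0 i2
  have hsub : S ⊆ S ∪ N := Finset.subset_union_left
  refine ⟨⟨?_, ?_, ?_⟩, hsub⟩
  · -- card
    have hdisjSN : Disjoint S N := by
      rw [Finset.disjoint_right]
      intro x hxN hxS
      obtain ⟨i, hi⟩ := (hmemN x).mp hxN
      exact hnotS i (hi ▸ hxS)
    rw [Finset.card_union_of_disjoint hdisjSN]
    have hcardN : N.card = (mFree T S j₀).card := by
      rw [hN, Finset.card_image_of_injective _ hinj, Finset.card_attach]
    omega
  · -- membership
    intro x hx j
    rcases Finset.mem_union.mp hx with hxS | hxN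
    · exact hSblk x hxS j
    · obtain ⟨i, hi⟩ := (hmemN x).mp hxN
      have hxj : ∀ j', (G j').1 i = x j' := fun j' => congrFun hi j'
      by_cases hj : j = j₀
      · subst hj; exact ⟨i.1, (hxj j) ▸ hgood0 i⟩
      · obtain ⟨i', _, hmem⟩ := (hgoodne j hj).1 i
        exact ⟨i', (hxj j) ▸ hmem⟩
  · -- uniqueness
    intro j i'
    by_cases hfree : i' ∈ mFree T S j
    · by_cases hj : j = j₀
      · subst hj
        refine ⟨fun j' => (G j').1 ⟨i', hfree⟩,
          ⟨Finset.mem_union_right _ ((hmemN _).mpr ⟨⟨i', hfree⟩, rfl⟩),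
            hgood0 ⟨i', hfree⟩⟩, ?_⟩
        rintro y ⟨hyM, hyT⟩
        rcases Finset.mem_union.mp hyM with hyS | hyN
        · exact absurd hyT (mem_mFree.mp hfree y hyS)
        · obtain ⟨i2, hi2⟩ := (hmemN y).mp hyN
          have hco : (G j).1 i2 = y j := congrFun hi2 j
          have h2 : i2 = ⟨i', hfree⟩ :=
            Subtype.ext (block_unique hdisj (hco ▸ hgood0 i2) hyT)
          rw [← hi2, h2]
      · obtain ⟨i, hi, hiu⟩ := (hgoodne j hj).2 i' hfree
        refine ⟨fun j' => (G j').1 i,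
          ⟨Finset.mem_union_right _ ((hmemN _).mpr ⟨i, rfl⟩), hi⟩, ?_⟩
        rintro y ⟨hyM, hyT⟩
        rcases Finset.mem_union.mp hyM with hyS | hyN
        · exact absurd hyT (mem_mFree.mp hfree y hyS)
        · obtain ⟨i2, hi2⟩ := (hmemN y).mp hyN
          have hco : (G j).1 i2 = y j := congrFun hi2 j
          have h2 : i2 = i := hiu i2 (show (G j).1 i2 ∈ T i' j by rw [hco]; exact hyT)
          rw [← hi2, h2]
    · have hocc : ∃ x ∈ S, x j ∈ T i' j := by
        by_contra h
        push_neg at h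
        exact hfree (mem_mFree.mpr h)
      obtain ⟨x₀, hx₀S, hx₀T⟩ := hocc
      refine ⟨x₀, ⟨hsub hx₀S, hx₀T⟩, ?_⟩
      rintro y ⟨hyM, hyT⟩
      rcases Finset.mem_union.mp hyM with hyS | hyN
      · exact hSinj j i' y hyS x₀ hx₀S hyT hx₀T
      · exfalso
        obtain ⟨i2, hi2⟩ := (hmemN y).mp hyN
        by_cases hj : j = j₀
        · subst hj
          have hco : (G j).1 i2 = y j := congrFun hi2 j
          have h2 : (i2 : Fin n₀) = i' := block_unique hdisj (hco ▸ hgood0 i2) hyT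
          exact hfree (h2 ▸ i2.2)
        · obtain ⟨i'', hi''free, hi''⟩ := (hgoodne j hj).1 i2
          have hco : (G j).1 i2 = y j := congrFun hi2 j
          have h2 : i'' = i' := block_unique hdisj (hco ▸ hi'') hyT
          exact hfree (h2 ▸ hi''free)

lemma card_eq_prod (T : Fin n₀ → Fin s → Finset α) (S : Finset (Fin s → α)) (j₀ : Fin s)
    (hdisj : ∀ j : Fin s, ∀ i i' : Fin n₀, i ≠ i' → Disjoint (T i j) (T i' j))
    (hSblk : ∀ x ∈ S, ∀ j, ∃ i, x j ∈ T i j)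
    (hSinj : ∀ (j : Fin s) (i : Fin n₀), ∀ x ∈ S, ∀ y ∈ S,
      x j ∈ T i j → y j ∈ T i j → x = y)
    (hn : (mFree T S j₀).card + S.card = n₀) :
    Nat.card {M : Finset (Fin s → α) // IsMTIM T M ∧ S ⊆ M}
      = ∏ j : Fin s, Nat.card {g : {i // i ∈ mFree T S j₀} → α // mGood T S j₀ j g} := by
  rw [← Nat.card_pi]
  refine (Nat.card_congr (Equiv.ofBijective
    (fun G => ⟨S ∪ (mFree T S j₀).attach.image (fun i j => (G j).1 i),
      buildM_spec T S j₀ hdisj hSblk hSinj hn G⟩) ⟨?_, ?_⟩)).symm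
  · -- injective
    intro G1 G2 h
    have hM : S ∪ (mFree T S j₀).attach.image (fun i j => (G1 j).1 i)
        = S ∪ (mFree T S j₀).attach.image (fun i j => (G2 j).1 i) :=
      congrArg Subtype.val h
    have hgood1 : ∀ i, (G1 j₀).1 i ∈ T i.1 j₀ := by
      have h' := (G1 j₀).2; rwa [mGood, if_pos rfl] at h'
    have hgood2 : ∀ i, (G2 j₀).1 i ∈ T i.1 j₀ := by
      have h' := (G2 j₀).2; rwa [mGood, if_pos rfl] at h'
    have key : ∀ i : {i // i ∈ mFree T S j₀},
        (fun j => (G1 j).1 i) = (fun j => (G2 j).1 i) := by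
      intro i
      have hmem : (fun j => (G1 j).1 i)
          ∈ S ∪ (mFree T S j₀).attach.image (fun i j => (G2 j).1 i) := by
        rw [← hM]
        exact Finset.mem_union_right _
          (Finset.mem_image.mpr ⟨i, Finset.mem_attach _ _, rfl⟩)
      rcases Finset.mem_union.mp hmem with hS' | hN'
      · exact absurd (hgood1 i) (mem_mFree.mp i.2 _ hS')
      · obtain ⟨i2, -, hi2⟩ := Finset.mem_image.mp hN'
        have hco : (G2 j₀).1 i2 = (G1 j₀).1 i := congrFun hi2 j₀
        have h2 : i2 = i := Subtype.ext (block_unique hdisj (hco ▸ hgood2 i2) (hgood1 i))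
        rw [← hi2, h2]
    funext j
    apply Subtype.ext
    funext i
    exact congrFun (key i) j
  · -- surjective
    rintro ⟨M, hM, hMS⟩
    set pick : {i // i ∈ mFree T S j₀} → (Fin s → α) :=
      fun i => (hM.2.2 j₀ i.1).choose with hpick
    have pickspec : ∀ i : {i // i ∈ mFree T S j₀},
        pick i ∈ M ∧ pick i j₀ ∈ T i.1 j₀ := fun i => (hM.2.2 j₀ i.1).choose_spec.1
    have pickuniq : ∀ i : {i // i ∈ mFree T S j₀}, ∀ y,
        y ∈ M ∧ y j₀ ∈ T i.1 j₀ → y = pick i := fun i => (hM.2.2 j₀ i.1).choose_spec.2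
    have pick_notS : ∀ i, pick i ∉ S := fun i h => mem_mFree.mp i.2 _ h (pickspec i).2
    have hMblockfree : ∀ (j : Fin s) (y), y ∈ M → y ∉ S →
        ∀ i0 : Fin n₀, y j ∈ T i0 j → i0 ∈ mFree T S j := by
      intro j y hyM hyS i0 hyT
      rw [mem_mFree]
      intro x hxS hxT
      obtain ⟨z, hz, hzu⟩ := hM.2.2 j i0
      have hxy : x = y := (hzu x ⟨hMS hxS, hxT⟩).trans (hzu y ⟨hyM, hyT⟩).symm
      exact hyS (hxy ▸ hxS)
    refine ⟨fun j => ⟨fun i => pick i j, ?_⟩, ?_⟩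
    · -- goodness
      by_cases hj : j = j₀
      · subst hj
        rw [mGood, if_pos rfl]
        intro i
        exact (pickspec i).2
      · rw [mGood, if_neg hj]
        constructor
        · intro i
          obtain ⟨i'', hi''⟩ := hM.2.1 _ (pickspec i).1 j
          exact ⟨i'', hMblockfree j _ (pickspec i).1 (pick_notS i) i'' hi'', hi''⟩
        · intro i' hi'
          obtain ⟨y, ⟨hyM, hyT⟩, hyu⟩ := hM.2.2 j i'
          have hyS : y ∉ S := fun hS => mem_mFree.mp hi' y hS hyT
          obtain ⟨i0, hi0⟩ := hM.2.1 y hyM j₀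
          have hi0free : i0 ∈ mFree T S j₀ := hMblockfree j₀ y hyM hyS i0 hi0
          have hpy : pick ⟨i0, hi0free⟩ = y :=
            (pickuniq ⟨i0, hi0free⟩ y ⟨hyM, hi0⟩).symm
          refine ⟨⟨i0, hi0free⟩, ?_, ?_⟩
          · show pick ⟨i0, hi0free⟩ j ∈ T i' j
            rw [hpy]; exact hyT
          · intro i2 hpi2
            have hpi2' : pick i2 j ∈ T i' j := hpi2
            have h12 : pick i2 = y := hyu (pick i2) ⟨(pickspec i2).1, hpi2'⟩
            apply Subtype.ext
            apply block_unique hdisj (pickspec i2).2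
            rw [h12]; exact hi0
    · -- f G = M
      apply Subtype.ext
      show S ∪ (mFree T S j₀).attach.image (fun i j => pick i j) = M
      apply Finset.Subset.antisymm
      · intro x hx
        rcases Finset.mem_union.mp hx with hxS | hxN
        · exact hMS hxS
        · obtain ⟨i, -, hi⟩ := Finset.mem_image.mp hxN
          rw [← hi]
          exact (pickspec i).1
      · intro x hxM
        by_cases hxS : x ∈ S
        · exact Finset.mem_union_left _ hxS
        · obtain ⟨i0, hi0⟩ := hM.2.1 x hxM j₀
          have hfree := hMblockfree j₀ x hxM hxS i0 hi0
          have hpx : pick ⟨i0, hfree⟩ = x := (pickuniq _ x ⟨hxM, hi0⟩).symm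
          exact Finset.mem_union_right _
            (Finset.mem_image.mpr ⟨⟨i0, hfree⟩, Finset.mem_attach _ _, by rw [← hpx]⟩)

end MTIMaux

open scoped Classical in
/-- **Counting MultiTree-inducing matchings containing a fixed set.** Let `s ≥ 2`,
`n₀ ≥ 1`, with each `A_j` partitioned into nonempty blocks `T 1 j, …, T n₀ j`. If
`S ⊆ A₁ × ⋯ × A_s` has `|S| = k` and is contained in at least one MultiTree-inducing
matching, then the number of MultiTree-inducing matchings containing `S` is
`((n₀ − k)!)^(s−1) · ∏ |T i j|`, where the product is over pairs `(i, j)` such that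
no element of `S` has its `j`-th coordinate in `T i j`. -/
theorem count_MTIM_containing {α : Type*} [Fintype α] [DecidableEq α]
    (s n₀ k : ℕ) (hs : 2 ≤ s) (hn₀ : 1 ≤ n₀)
    (T : Fin n₀ → Fin s → Finset α)
    (hne : ∀ i j, (T i j).Nonempty)
    (hdisj : ∀ j : Fin s, ∀ i i' : Fin n₀, i ≠ i' → Disjoint (T i j) (T i' j))
    (S : Finset (Fin s → α)) (hk : S.card = k)
    (hS : ∃ M : Finset (Fin s → α), IsMTIM T M ∧ S ⊆ M) :
    Set.ncard {M : Finset (Fin s → α) | IsMTIM T M ∧ S ⊆ M} =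
      (Nat.factorial (n₀ - k)) ^ (s - 1) *
        ∏ i : Fin n₀, ∏ j : Fin s,
          (if ∀ x ∈ S, x j ∉ T i j then (T i j).card else 1) := by
  classical
  obtain ⟨M₀, hM₀, hM₀S⟩ := hS
  have hSblk : ∀ x ∈ S, ∀ j, ∃ i, x j ∈ T i j := fun x hx j => hM₀.2.1 x (hM₀S hx) j
  have hSinj : ∀ (j : Fin s) (i : Fin n₀), ∀ x ∈ S, ∀ y ∈ S,
      x j ∈ T i j → y j ∈ T i j → x = y := by
    intro j i x hx y hy hxT hyT
    obtain ⟨z, hz, hzu⟩ := hM₀.2.2 j i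
    exact (hzu x ⟨hM₀S hx, hxT⟩).trans (hzu y ⟨hM₀S hy, hyT⟩).symm
  have hs0 : 0 < s := by omega
  set j₀ : Fin s := ⟨0, hs0⟩ with hj₀
  have hcardfree : ∀ j, (MTIMaux.mFree T S j).card + S.card = n₀ :=
    MTIMaux.card_mFree_add T S hdisj hSblk hSinj
  have hfreecard : ∀ j, (MTIMaux.mFree T S j).card = n₀ - k := by
    intro j
    have := hcardfree j
    omega
  rw [← Nat.card_coe_set_eq]
  show Nat.card {M : Finset (Fin s → α) // IsMTIM T M ∧ S ⊆ M} = _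
  rw [MTIMaux.card_eq_prod T S j₀ hdisj hSblk hSinj (hcardfree j₀)]
  have hfact : ∀ j : Fin s,
      Nat.card {g : {i // i ∈ MTIMaux.mFree T S j₀} → α // MTIMaux.mGood T S j₀ j g}
        = (if j = j₀ then 1 else (n₀ - k).factorial)
            * ∏ i ∈ MTIMaux.mFree T S j, (T i j).card := by
    intro j
    by_cases hj : j = j₀
    · subst hj
      rw [if_pos rfl, one_mul, MTIMaux.card_good_self]
    · rw [if_neg hj, MTIMaux.card_good_ne T S j₀ j hj hdisj
        (by rw [hfreecard, hfreecard]), hfreecard]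
  rw [Finset.prod_congr rfl (fun j _ => hfact j), Finset.prod_mul_distrib]
  have hprodif : (∏ j : Fin s, if j = j₀ then 1 else (n₀ - k).factorial)
      = (n₀ - k).factorial ^ (s - 1) := by
    rw [← Finset.mul_prod_erase Finset.univ _ (Finset.mem_univ j₀), if_pos rfl, one_mul]
    rw [Finset.prod_congr rfl (fun j hj => if_neg (Finset.ne_of_mem_erase hj))]
    rw [Finset.prod_const, Finset.card_erase_of_mem (Finset.mem_univ j₀), Finset.card_univ,
      Fintype.card_fin]
  rw [hprodif]
  congr 1
  rw [Finset.prod_comm]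
  refine Finset.prod_congr rfl fun j _ => ?_
  rw [MTIMaux.mFree, Finset.prod_filter]
end

section
/- Let s ≥ 2 and n_0 ≥ 1 be integers. For each j ∈ [s] let A_j be a finite set partitioned into nonempty blocks T_{1,j}, …, T_{n_0,j}, and let H denote the family of all MultiTree-inducing matchings M ⊆ A_1 × ⋯ × A_s. Then H is (n_0/3)^{s-1}-spread: for every nonempty set S ⊆ A_1 × ⋯ × A_s, the number of M ∈ H with S ⊆ M is at most |H| / (n_0/3)^{|S|(s-1)}. -/
namespace MTIMaux

variable {α : Type*} [Fintype α] [DecidableEq α] {s n₀ : ℕ}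

/-- the block index of a value at coordinate `j` -/
noncomputable def blk (T : Fin n₀ → Fin s → Finset α) (hn : 0 < n₀) (j : Fin s) (a : α) :
    Fin n₀ :=
  if h : ∃ i, a ∈ T i j then h.choose else ⟨0, hn⟩

lemma blk_mem {T : Fin n₀ → Fin s → Finset α} (hn : 0 < n₀) {j : Fin s} {a : α}
    (h : ∃ i, a ∈ T i j) : a ∈ T (blk T hn j a) j := by
  rw [blk, dif_pos h]; exact h.choose_spec

lemma blk_eq {T : Fin n₀ → Fin s → Finset α}
    (hdisj : ∀ j : Fin s, ∀ i i' : Fin n₀, i ≠ i' → Disjoint (T i j) (T i' j))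
    (hn : 0 < n₀) {j : Fin s} {a : α} {i : Fin n₀} (h : a ∈ T i j) :
    blk T hn j a = i := by
  by_contra hne
  exact Finset.disjoint_left.mp (hdisj j _ i hne) (blk_mem hn ⟨i, h⟩) h

/-- the unique member of `M` whose `j`-th coordinate lies in block `i` -/
noncomputable def memJ (T : Fin n₀ → Fin s → Finset α) (M : Finset (Fin s → α))
    (hM : IsMTIM T M) (j : Fin s) (i : Fin n₀) : Fin s → α :=
  Finset.choose (fun x => x j ∈ T i j) M (hM.2.2 j i)

lemma memJ_mem {T : Fin n₀ → Fin s → Finset α} {M : Finset (Fin s → α)}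
    (hM : IsMTIM T M) (j : Fin s) (i : Fin n₀) : memJ T M hM j i ∈ M :=
  Finset.choose_mem _ _ _

lemma memJ_block {T : Fin n₀ → Fin s → Finset α} {M : Finset (Fin s → α)}
    (hM : IsMTIM T M) (j : Fin s) (i : Fin n₀) : (memJ T M hM j i) j ∈ T i j := by
  unfold memJ
  exact Finset.choose_property (fun x => x j ∈ T i j) M (hM.2.2 j i)

lemma memJ_eq {T : Fin n₀ → Fin s → Finset α} {M : Finset (Fin s → α)}
    (hM : IsMTIM T M) {j : Fin s} {i : Fin n₀} {x : Fin s → α}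
    (hx : x ∈ M) (hxj : x j ∈ T i j) : memJ T M hM j i = x := by
  obtain ⟨y, -, hy⟩ := hM.2.2 j i
  exact (hy _ ⟨memJ_mem hM j i, memJ_block hM j i⟩).trans (hy x ⟨hx, hxj⟩).symm

lemma memJ_self {T : Fin n₀ → Fin s → Finset α} {M : Finset (Fin s → α)}
    (hM : IsMTIM T M) (hn : 0 < n₀) {x : Fin s → α} (hx : x ∈ M) (j : Fin s) :
    memJ T M hM j (blk T hn j (x j)) = x :=
  memJ_eq hM hx (blk_mem hn (hM.2.1 x hx j))

/-- replacing the pairing of a matching: member `i` gets, at coordinate `j`, the value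
living in block `c j i`. -/
noncomputable def newMatch (T : Fin n₀ → Fin s → Finset α) (M : Finset (Fin s → α))
    (hM : IsMTIM T M) (c : Fin s → Fin n₀ → Fin n₀) : Finset (Fin s → α) :=
  Finset.image (fun i => fun j => memJ T M hM j (c j i) j) Finset.univ

variable {T : Fin n₀ → Fin s → Finset α} {M : Finset (Fin s → α)}

lemma newMatch_isMTIM
    (hdisj : ∀ j : Fin s, ∀ i i' : Fin n₀, i ≠ i' → Disjoint (T i j) (T i' j))
    (hs : 0 < s) (hM : IsMTIM T M) {c : Fin s → Fin n₀ → Fin n₀}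
    (hc : ∀ j, Function.Bijective (c j)) :
    IsMTIM T (newMatch T M hM c) := by
  set nx := fun (i : Fin n₀) => fun j => memJ T M hM j (c j i) j with hnx
  have hblock : ∀ i j, nx i j ∈ T (c j i) j := fun i j => memJ_block hM j (c j i)
  have hinj : Function.Injective nx := by
    intro i i' hii
    set z : Fin s := ⟨0, hs⟩
    have h1 : nx i z ∈ T (c z i) z := hblock i z
    have h2 : nx i z ∈ T (c z i') z := hii ▸ hblock i' z
    have : c z i = c z i' := by
      by_contra hne
      exact Finset.disjoint_left.mp (hdisj z _ _ hne) h1 h2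
    exact (hc z).1 this
  refine ⟨?_, ?_, ?_⟩
  · rw [newMatch, Finset.card_image_of_injective _ hinj, Finset.card_univ, Fintype.card_fin]
  · rintro x hx j
    obtain ⟨i, -, rfl⟩ := Finset.mem_image.mp hx
    exact ⟨c j i, hblock i j⟩
  · intro j i
    obtain ⟨i₀, hi₀⟩ := (hc j).2 i
    refine ⟨nx i₀, ⟨Finset.mem_image.mpr ⟨i₀, Finset.mem_univ _, rfl⟩, by rw [← hi₀]; exact hblock i₀ j⟩, ?_⟩
    rintro y ⟨hy, hyj⟩
    obtain ⟨i₁, -, rfl⟩ := Finset.mem_image.mp hy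
    have : c j i₁ = i := by
      by_contra hne
      exact Finset.disjoint_left.mp (hdisj j _ _ hne) (hblock i₁ j) hyj
    have : i₁ = i₀ := (hc j).1 (this.trans hi₀.symm)
    rw [this]

lemma memJ_newMatch
    (hdisj : ∀ j : Fin s, ∀ i i' : Fin n₀, i ≠ i' → Disjoint (T i j) (T i' j))
    (hs : 0 < s) (hM : IsMTIM T M) {c : Fin s → Fin n₀ → Fin n₀}
    (hc : ∀ j, Function.Bijective (c j)) (j : Fin s) (i : Fin n₀) :
    memJ T (newMatch T M hM c) (newMatch_isMTIM hdisj hs hM hc) j (c j i)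
      = fun j' => memJ T M hM j' (c j' i) j' := by
  apply memJ_eq
  · exact Finset.mem_image.mpr ⟨i, Finset.mem_univ _, rfl⟩
  · exact memJ_block hM j (c j i)

/-- every matching is recovered from its pairing data -/
lemma self_eq_newMatch (hn : 0 < n₀) (hM : IsMTIM T M) (z : Fin s) :
    M = newMatch T M hM (fun j i => blk T hn j (memJ T M hM z i j)) := by
  ext x
  constructor
  · intro hx
    refine Finset.mem_image.mpr ⟨blk T hn z (x z), Finset.mem_univ _, ?_⟩
    have hxz : memJ T M hM z (blk T hn z (x z)) = x := memJ_self hM hn hx z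
    funext j
    simp only [hxz]
    exact congrFun (memJ_self hM hn hx j) j
  · intro hx
    obtain ⟨i, -, rfl⟩ := Finset.mem_image.mp hx
    have : (fun j => memJ T M hM j (blk T hn j (memJ T M hM z i j)) j)
        = memJ T M hM z i := by
      funext j
      exact congrFun (memJ_self hM hn (memJ_mem hM z i) j) j
    rw [this]
    exact memJ_mem hM z i

lemma exists_perm_extend {k n : ℕ} (u w : Fin k ↪ Fin n) :
    ∃ τ : Equiv.Perm (Fin n), ∀ m, τ (u m) = w m := by
  classical
  have hcard : Fintype.card {x // x ∉ Set.range u} = Fintype.card {x // x ∉ Set.range w} := by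
    have h1 : Fintype.card ↑(Set.range ⇑u) = k := by
      rw [Set.card_range_of_injective u.injective, Fintype.card_fin]
    have h2 : Fintype.card ↑(Set.range ⇑w) = k := by
      rw [Set.card_range_of_injective w.injective, Fintype.card_fin]
    rw [Fintype.card_subtype_compl, Fintype.card_subtype_compl]
    congr 1
    · rw [show Fintype.card {x : Fin n // x ∈ Set.range ⇑u}
          = Fintype.card ↑(Set.range ⇑u) from Fintype.card_congr (Equiv.refl _), h1]
      rw [show Fintype.card {x : Fin n // x ∈ Set.range ⇑w}
          = Fintype.card ↑(Set.range ⇑w) from Fintype.card_congr (Equiv.refl _), h2]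
  obtain ⟨g⟩ := Fintype.card_eq.mp hcard
  refine ⟨((Equiv.sumCompl (· ∈ Set.range u)).symm.trans
      ((Equiv.sumCongr ((Equiv.ofInjective u u.injective).symm.trans
        (Equiv.ofInjective w w.injective)) g).trans
      (Equiv.sumCompl (· ∈ Set.range w)))), ?_⟩
  intro m
  have h1 : (Equiv.sumCompl (· ∈ Set.range u)).symm (u m)
      = Sum.inl ⟨u m, ⟨m, rfl⟩⟩ := by
    rw [Equiv.sumCompl_symm_apply_of_pos ⟨m, rfl⟩]
  simp only [Equiv.trans_apply, h1, Equiv.sumCongr_apply, Sum.map_inl]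
  have h2 : (Equiv.ofInjective u u.injective).symm ⟨u m, ⟨m, rfl⟩⟩ = m := by
    apply (Equiv.ofInjective u u.injective).injective
    simp
  rw [h2]
  simp [Equiv.sumCompl_apply_inl, Equiv.ofInjective_apply]

set_option maxHeartbeats 1000000 in
lemma card_le (hs : 2 ≤ s) (hn : 0 < n₀)
    (T : Fin n₀ → Fin s → Finset α)
    (hdisj : ∀ j : Fin s, ∀ i i' : Fin n₀, i ≠ i' → Disjoint (T i j) (T i' j))
    (S : Finset (Fin s → α))
    (hSsub : ∀ x ∈ S, ∀ j : Fin s, ∃ i : Fin n₀, x j ∈ T i j)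
    (M₀ : Finset (Fin s → α)) (hM₀ : IsMTIM T M₀) (hSM₀ : S ⊆ M₀) :
    {M : Finset (Fin s → α) | IsMTIM T M ∧ S ⊆ M}.ncard
        * (n₀.descFactorial S.card) ^ (s - 1)
      ≤ {M : Finset (Fin s → α) | IsMTIM T M}.ncard := by
  classical
  have hs0 : 0 < s := by omega
  set z : Fin s := ⟨0, hs0⟩ with hz
  set k := S.card with hk
  set e : Fin k ≃ {x // x ∈ S} := S.equivFin.symm with he
  -- the blocks of the elements of S at each coordinate
  have huinj : ∀ j : Fin s, Function.Injective
      (fun m : Fin k => blk T hn j ((e m : Fin s → α) j)) := by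
    intro j m m' hmm
    simp only at hmm
    have hxm : (e m : Fin s → α) ∈ M₀ := hSM₀ (e m).2
    have hxm' : (e m' : Fin s → α) ∈ M₀ := hSM₀ (e m').2
    have hb1 : (e m : Fin s → α) j ∈ T (blk T hn j ((e m : Fin s → α) j)) j :=
      blk_mem hn (hSsub _ (e m).2 j)
    have hb2 : (e m' : Fin s → α) j ∈ T (blk T hn j ((e m : Fin s → α) j)) j := by
      rw [hmm]; exact blk_mem hn (hSsub _ (e m').2 j)
    have := (memJ_eq hM₀ hxm hb1).symm.trans (memJ_eq hM₀ hxm' hb2)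
    have : e m = e m' := Subtype.ext this
    exact e.injective this
  set u : Fin s → (Fin k ↪ Fin n₀) :=
    fun j => ⟨fun m => blk T hn j ((e m : Fin s → α) j), huinj j⟩ with hu
  set P := {M : Finset (Fin s → α) | IsMTIM T M ∧ S ⊆ M} with hP
  set Q := {M : Finset (Fin s → α) | IsMTIM T M} with hQ
  -- the pairing map of a matching
  set pr : ∀ M : Finset (Fin s → α), IsMTIM T M → Fin s → Fin n₀ → Fin n₀ :=
    fun M hM j i => blk T hn j (memJ T M hM z i j) with hpr
  have hpr_z : ∀ M hM i, pr M hM z i = i := by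
    intro M hM i
    exact blk_eq hdisj hn (memJ_block hM z i)
  have hpr_bij : ∀ M hM j, Function.Bijective (pr M hM j) := by
    intro M hM j
    rw [Fintype.bijective_iff_injective_and_card]
    refine ⟨?_, rfl⟩
    intro i i' hii
    simp only [hpr] at hii
    have h1 : memJ T M hM z i j ∈ T (blk T hn j (memJ T M hM z i j)) j :=
      blk_mem hn (hM.2.1 _ (memJ_mem hM z i) j)
    have h2 : memJ T M hM z i' j ∈ T (blk T hn j (memJ T M hM z i j)) j := by
      rw [hii]; exact blk_mem hn (hM.2.1 _ (memJ_mem hM z i') j)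
    have heq : memJ T M hM z i = memJ T M hM z i' :=
      (memJ_eq hM (memJ_mem hM z i) h1).symm.trans (memJ_eq hM (memJ_mem hM z i') h2)
    have hb1 : memJ T M hM z i z ∈ T i z := memJ_block hM z i
    have hb2 : memJ T M hM z i z ∈ T i' z := by rw [heq]; exact memJ_block hM z i'
    by_contra hne
    exact Finset.disjoint_left.mp (hdisj z i i' hne) hb1 hb2
  -- the modified pairing
  set cmod : ∀ M : Finset (Fin s → α), IsMTIM T M →
      ({j : Fin s // j ≠ z} → (Fin k ↪ Fin n₀)) → Fin s → Fin n₀ → Fin n₀ :=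
    fun M hM ι j i => if h : j = z then i else
      (exists_perm_extend (u j) (ι ⟨j, h⟩)).choose (pr M hM j i) with hcmod
  have hcmod_z : ∀ M hM ι i, cmod M hM ι z i = i := by
    intro M hM ι i; simp [hcmod]
  have hcmod_bij : ∀ M hM ι j, Function.Bijective (cmod M hM ι j) := by
    intro M hM ι j
    by_cases h : j = z
    · subst h; simp only [hcmod, dif_pos]; exact Function.bijective_id
    · simp only [hcmod, dif_neg h]
      exact ((exists_perm_extend (u j) (ι ⟨j, h⟩)).choose.bijective).comp (hpr_bij M hM j)
  -- the injection
  set F : {M // M ∈ P} × ({j : Fin s // j ≠ z} → (Fin k ↪ Fin n₀)) → {M // M ∈ Q} :=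
    fun p => ⟨newMatch T p.1.1 p.1.2.1 (cmod p.1.1 p.1.2.1 p.2),
      newMatch_isMTIM hdisj hs0 p.1.2.1 (hcmod_bij p.1.1 p.1.2.1 p.2)⟩ with hF
  have key : ∀ (N N' : Finset (Fin s → α)) (hN : IsMTIM T N) (hN' : IsMTIM T N'),
      N = N' → ∀ j i, memJ T N hN j i = memJ T N' hN' j i := by
    rintro N _ hN hN' rfl j i; rfl
  -- pairing of the new matching
  have hpr_new : ∀ (M : Finset (Fin s → α)) (hM : IsMTIM T M)
      (c : Fin s → Fin n₀ → Fin n₀) (hc : ∀ j, Function.Bijective (c j))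
      (hcz : ∀ i, c z i = i) (j : Fin s) (i : Fin n₀),
      pr (newMatch T M hM c) (newMatch_isMTIM hdisj hs0 hM hc) j i = c j i := by
    intro M hM c hc hcz j i
    have h2 : memJ T (newMatch T M hM c) (newMatch_isMTIM hdisj hs0 hM hc) z i
        = fun j' => memJ T M hM j' (c j' i) j' := by
      have := memJ_newMatch hdisj hs0 hM hc z i
      rwa [hcz i] at this
    simp only [hpr, h2]
    exact blk_eq hdisj hn (memJ_block hM j (c j i))
  -- columns of the new matching
  have hcol_new : ∀ (M : Finset (Fin s → α)) (hM : IsMTIM T M)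
      (c : Fin s → Fin n₀ → Fin n₀) (hc : ∀ j, Function.Bijective (c j))
      (j : Fin s) (b : Fin n₀),
      memJ T (newMatch T M hM c) (newMatch_isMTIM hdisj hs0 hM hc) j b j
        = memJ T M hM j b j := by
    intro M hM c hc j b
    obtain ⟨i₀, rfl⟩ := (hc j).2 b
    rw [memJ_newMatch hdisj hs0 hM hc j i₀]
  have hFinj : Function.Injective F := by
    rintro ⟨⟨M₁, hMP₁⟩, ι₁⟩ ⟨⟨M₂, hMP₂⟩, ι₂⟩ hFeq
    obtain ⟨hM₁, hS₁⟩ := hMP₁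
    obtain ⟨hM₂, hS₂⟩ := hMP₂
    simp only [hF, Subtype.mk.injEq] at hFeq
    -- recover ι
    have hiota : ι₁ = ι₂ := by
      funext jj
      apply DFunLike.ext
      intro m
      have hxm : (e m : Fin s → α) ∈ M₁ := hS₁ (e m).2
      have hxm2 : (e m : Fin s → α) ∈ M₂ := hS₂ (e m).2
      have hmez : ∀ (N : Finset (Fin s → α)) (hN : IsMTIM T N),
          (e m : Fin s → α) ∈ N → memJ T N hN z (u z m) = (e m : Fin s → α) := by
        intro N hN hmem
        exact memJ_eq hN hmem (blk_mem hn (hSsub _ (e m).2 z))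
      have hside : ∀ (M : Finset (Fin s → α)) (hM : IsMTIM T M) (hS : S ⊆ M)
          (ι : {j : Fin s // j ≠ z} → (Fin k ↪ Fin n₀)),
          pr (newMatch T M hM (cmod M hM ι)) (newMatch_isMTIM hdisj hs0 hM (hcmod_bij M hM ι))
            jj.1 (u z m) = ι jj m := by
        intro M hM hS ι
        rw [hpr_new M hM _ (hcmod_bij M hM ι) (hcmod_z M hM ι) jj.1 (u z m)]
        have h1 : pr M hM jj.1 (u z m) = u jj.1 m := by
          simp only [hpr]
          rw [hmez M hM (hS (e m).2)]
          rfl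
        simp only [hcmod, dif_neg jj.2]
        rw [h1]
        exact (exists_perm_extend (u jj.1) (ι jj)).choose_spec m
      have e1 := hside M₁ hM₁ hS₁ ι₁
      have e2 := hside M₂ hM₂ hS₂ ι₂
      rw [← e1, ← e2]
      simp only [hpr]
      rw [key _ _ _ _ hFeq]
    subst hiota
    -- recover the matching
    have hceq : ∀ j i, cmod M₁ hM₁ ι₁ j i = cmod M₂ hM₂ ι₁ j i := by
      intro j i
      rw [← hpr_new M₁ hM₁ _ (hcmod_bij M₁ hM₁ ι₁) (hcmod_z M₁ hM₁ ι₁) j i,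
          ← hpr_new M₂ hM₂ _ (hcmod_bij M₂ hM₂ ι₁) (hcmod_z M₂ hM₂ ι₁) j i]
      simp only [hpr]
      rw [key _ _ _ _ hFeq]
    have hpreq : ∀ j i, pr M₁ hM₁ j i = pr M₂ hM₂ j i := by
      intro j i
      by_cases h : j = z
      · subst h; rw [hpr_z, hpr_z]
      · have := hceq j i
        simp only [hcmod, dif_neg h] at this
        exact (exists_perm_extend (u j) (ι₁ ⟨j, h⟩)).choose.injective this
    have hcoleq : ∀ j b, memJ T M₁ hM₁ j b j = memJ T M₂ hM₂ j b j := by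
      intro j b
      rw [← hcol_new M₁ hM₁ _ (hcmod_bij M₁ hM₁ ι₁) j b,
          ← hcol_new M₂ hM₂ _ (hcmod_bij M₂ hM₂ ι₁) j b]
      exact congrFun (key _ _ _ _ hFeq j b) j
    have hM12 : M₁ = M₂ := by
      rw [self_eq_newMatch hn hM₁ z, self_eq_newMatch hn hM₂ z]
      unfold newMatch
      apply Finset.image_congr
      intro i _
      funext j
      simp only []
      rw [hcoleq j (blk T hn j (memJ T M₁ hM₁ z i j))]
      rw [show blk T hn j (memJ T M₁ hM₁ z i j) = blk T hn j (memJ T M₂ hM₂ z i j) from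
        hpreq j i]
    subst hM12
    rfl
  -- counting
  have hcount := Nat.card_le_card_of_injective F hFinj
  rw [Nat.card_prod] at hcount
  have h1 : Nat.card {M // M ∈ P} = P.ncard := Nat.card_coe_set_eq P
  have h2 : Nat.card {M // M ∈ Q} = Q.ncard := Nat.card_coe_set_eq Q
  have h3 : Nat.card ({j : Fin s // j ≠ z} → (Fin k ↪ Fin n₀))
      = (n₀.descFactorial k) ^ (s - 1) := by
    rw [Nat.card_eq_fintype_card, Fintype.card_fun, Fintype.card_embedding_eq,
      Fintype.card_fin, Fintype.card_fin]
    congr 1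
    rw [Fintype.card_subtype_compl, Fintype.card_subtype_eq, Fintype.card_fin]
  rw [h1, h2, h3] at hcount
  exact hcount
lemma MTIM_fact_lower (k : ℕ) : ((k:ℝ)/3)^k ≤ (Nat.factorial k : ℝ) := by
  induction k with
  | zero => simp
  | succ n ih =>
    rcases Nat.eq_zero_or_pos n with h | h
    · subst h; norm_num [Nat.factorial]
    · have hn : (0:ℝ) < n := by exact_mod_cast h
      have hb : (1 + 1/(n:ℝ))^n ≤ Real.exp 1 := by
        have h1 : 1 + 1/(n:ℝ) ≤ Real.exp (1/n) := by
          have := Real.add_one_le_exp (1/(n:ℝ)); linarith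
        calc (1 + 1/(n:ℝ))^n ≤ (Real.exp (1/n))^n := by
              apply pow_le_pow_left₀ (by positivity) h1
          _ = Real.exp ((n:ℝ) * (1/n)) := by rw [Real.exp_nat_mul]
          _ = Real.exp 1 := by rw [mul_one_div, div_self hn.ne']
      have h3 : ((n:ℝ)+1)^n ≤ 3 * (n:ℝ)^n := by
        have hrw : ((n:ℝ)+1)^n = (n:ℝ)^n * (1 + 1/n)^n := by
          rw [← mul_pow]; congr 1; field_simp
        rw [hrw]
        have he3 : Real.exp 1 ≤ 3 := by
          have := Real.exp_one_lt_d9; norm_num at this ⊢; linarith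
        calc (n:ℝ)^n * (1+1/n)^n ≤ (n:ℝ)^n * 3 := by
              apply mul_le_mul_of_nonneg_left (hb.trans he3) (by positivity)
          _ = 3 * (n:ℝ)^n := by ring
      have key : (((n:ℝ)+1)/3)^(n+1) ≤ ((n:ℝ)+1) * ((n:ℝ)/3)^n := by
        rw [pow_succ]
        calc (((n:ℝ)+1)/3)^n * (((n:ℝ)+1)/3)
            = (((n:ℝ)+1)^n/3^n) * (((n:ℝ)+1)/3) := by rw [div_pow]
          _ ≤ (3*(n:ℝ)^n/3^n) * (((n:ℝ)+1)/3) := by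
              apply mul_le_mul_of_nonneg_right _ (by positivity)
              exact div_le_div_of_nonneg_right h3 (by positivity)
          _ = ((n:ℝ)+1) * ((n:ℝ)/3)^n := by rw [div_pow]; field_simp
      push_cast
      calc (((n:ℝ)+1)/3)^(n+1) ≤ ((n:ℝ)+1) * ((n:ℝ)/3)^n := key
        _ ≤ ((n:ℝ)+1) * (Nat.factorial n : ℝ) := by
            apply mul_le_mul_of_nonneg_left ih (by positivity)
        _ ≤ (Nat.factorial (n+1) : ℝ) := by rw [Nat.factorial_succ]; push_cast; linarith [Nat.factorial_pos n]
lemma MTIM_pow_div_le_choose : ∀ (k n : ℕ), k ≤ n → ((n:ℝ)/k)^k ≤ (n.choose k : ℝ) := by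
  intro k
  induction k with
  | zero => intro n _; simp
  | succ k ih =>
    intro n hn
    obtain ⟨m, rfl⟩ : ∃ m, n = m + 1 := ⟨n - 1, by omega⟩
    have hkm : k ≤ m := by omega
    have ihm := ih m hkm
    have step : (((m:ℝ)+1)/((k:ℝ)+1))^k ≤ ((m:ℝ)/k)^k := by
      rcases Nat.eq_zero_or_pos k with hk | hk
      · subst hk; simp
      · have hk' : (0:ℝ) < k := by exact_mod_cast hk
        apply pow_le_pow_left₀ (by positivity)
        rw [div_le_div_iff₀ (by positivity) hk']
        have hm' : (k:ℝ) ≤ m := by exact_mod_cast hkm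
        nlinarith
    have hid : ((m:ℝ)+1) * (m.choose k : ℝ) = ((m+1).choose (k+1) : ℝ) * ((k:ℝ)+1) := by
      exact_mod_cast congrArg (Nat.cast : ℕ → ℝ) (Nat.add_one_mul_choose_eq m k)
    have hfin : (((m:ℝ)+1)/((k:ℝ)+1)) * (m.choose k : ℝ) = ((m+1).choose (k+1) : ℝ) := by
      rw [div_mul_eq_mul_div, hid]
      field_simp
    push_cast
    calc (((m:ℝ)+1)/((k:ℝ)+1))^(k+1)
        = (((m:ℝ)+1)/((k:ℝ)+1)) * (((m:ℝ)+1)/((k:ℝ)+1))^k := by rw [pow_succ]; ring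
      _ ≤ (((m:ℝ)+1)/((k:ℝ)+1)) * ((m:ℝ)/k)^k := by
          apply mul_le_mul_of_nonneg_left step (by positivity)
      _ ≤ (((m:ℝ)+1)/((k:ℝ)+1)) * (m.choose k : ℝ) := by
          apply mul_le_mul_of_nonneg_left ihm (by positivity)
      _ = ((m+1).choose (k+1) : ℝ) := hfin

lemma MTIM_pow_le_descFactorial (n k : ℕ) (h : k ≤ n) :
    ((n:ℝ)/3)^k ≤ (n.descFactorial k : ℝ) := by
  rcases Nat.eq_zero_or_pos k with hk | hk
  · subst hk; simp
  · have hk' : (0:ℝ) < k := by exact_mod_cast hk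
    have h1 : ((n:ℝ)/3)^k = ((k:ℝ)/3)^k * ((n:ℝ)/k)^k := by
      rw [← mul_pow]; congr 1; field_simp
    rw [h1, Nat.descFactorial_eq_factorial_mul_choose]
    push_cast
    apply mul_le_mul (MTIM_fact_lower k) (MTIM_pow_div_le_choose k n h) (by positivity) (by positivity)

end MTIMaux

/-- **Lemma 2 (spreadness).** Let `s ≥ 2`, `n₀ ≥ 1`, with each `A_j` partitioned into
nonempty blocks `T 1 j, …, T n₀ j`, and let `H` be the family of all
MultiTree-inducing matchings. Then `H` is `(n₀/3)^(s−1)`-spread: for every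
nonempty `S ⊆ A₁ × ⋯ × A_s`, the number of `M ∈ H` with `S ⊆ M` is at most
`|H| / (n₀/3)^(|S|(s−1))`. -/
theorem MTIM_spread {α : Type*} [Fintype α] [DecidableEq α]
    (s n₀ : ℕ) (hs : 2 ≤ s) (hn₀ : 1 ≤ n₀)
    (T : Fin n₀ → Fin s → Finset α)
    (hne : ∀ i j, (T i j).Nonempty)
    (hdisj : ∀ j : Fin s, ∀ i i' : Fin n₀, i ≠ i' → Disjoint (T i j) (T i' j))
    (S : Finset (Fin s → α)) (hSne : S.Nonempty)
    (hSsub : ∀ x ∈ S, ∀ j : Fin s, ∃ i : Fin n₀, x j ∈ T i j) :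
    (Set.ncard {M : Finset (Fin s → α) | IsMTIM T M ∧ S ⊆ M} : ℝ) ≤
      (Set.ncard {M : Finset (Fin s → α) | IsMTIM T M} : ℝ) /
        ((n₀ : ℝ) / 3) ^ (S.card * (s - 1)) := by
  classical
  have hn : 0 < n₀ := hn₀
  have hden : (0:ℝ) < ((n₀ : ℝ) / 3) ^ (S.card * (s - 1)) := by
    apply pow_pos
    have : (1:ℝ) ≤ (n₀:ℝ) := by exact_mod_cast hn₀
    linarith
  rcases Set.eq_empty_or_nonempty {M : Finset (Fin s → α) | IsMTIM T M ∧ S ⊆ M} with hP | hP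
  · rw [hP]
    simp only [Set.ncard_empty, Nat.cast_zero]
    positivity
  · obtain ⟨M₀, hM₀, hSM₀⟩ := hP
    have hkn : S.card ≤ n₀ := by
      have := Finset.card_le_card hSM₀
      rwa [hM₀.1] at this
    rw [le_div_iff₀ hden]
    have hcount := MTIMaux.card_le hs hn T hdisj S hSsub M₀ hM₀ hSM₀
    have hval : ((n₀ : ℝ) / 3) ^ (S.card * (s - 1))
        ≤ ((n₀.descFactorial S.card : ℝ)) ^ (s - 1) := by
      rw [pow_mul]
      apply pow_le_pow_left₀ (by positivity)
      exact MTIMaux.MTIM_pow_le_descFactorial n₀ S.card hkn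
    calc (Set.ncard {M : Finset (Fin s → α) | IsMTIM T M ∧ S ⊆ M} : ℝ)
          * ((n₀ : ℝ) / 3) ^ (S.card * (s - 1))
        ≤ (Set.ncard {M : Finset (Fin s → α) | IsMTIM T M ∧ S ⊆ M} : ℝ)
          * ((n₀.descFactorial S.card : ℝ)) ^ (s - 1) := by
          apply mul_le_mul_of_nonneg_left hval (by positivity)
      _ = (((Set.ncard {M : Finset (Fin s → α) | IsMTIM T M ∧ S ⊆ M}
            * (n₀.descFactorial S.card) ^ (s - 1) : ℕ) : ℝ)) := by push_cast; ring
      _ ≤ (Set.ncard {M : Finset (Fin s → α) | IsMTIM T M} : ℝ) := by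
          exact_mod_cast hcount
end

section
/- Consider the random graph process (G_m)_{m=0}^{N} on vertex set [n], N = C(n,2). Let ε = (log n)^{-2/5} and θ_0 = 5 log log n / log n. Then with high probability, simultaneously for every integer m with (n/2)(log n − log log n) ≤ m ≤ (n/2)(log n + log log n), every real a with 10^{-3} ≤ a ≤ m/(2 n log n), and every set A of edges of G_m with |A| ≥ a n log n, the number of vertices incident to at least one edge of A is at least (2a(1 − θ_0)/(1 + ε))^{1/2} · n. -/
/-- The edges of the complete graph `K_n` on vertex set `Fin n`. -/
abbrev EdgeKn (n : ℕ) := {e : Sym2 (Fin n) // ¬ e.IsDiag}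

/-- An ordering of the edges of `K_n`: a bijection from `Fin (n.choose 2)` to the
edge set of `K_n`.  A uniformly random such bijection models the random graph
process `G_0 ⊂ G_1 ⊂ ⋯ ⊂ G_N` on `[n]`. -/
abbrev EOrd (n : ℕ) := Fin (n.choose 2) ≃ EdgeKn n

open scoped Classical in
/-- Probability of an event under the uniform distribution on a finite sample space. -/
noncomputable def prob {Ω : Type*} [Fintype Ω] (p : Ω → Prop) : ℝ :=
  (Finset.univ.filter fun ω => p ω).card / Fintype.card Ω

/-- The graph `G_m` of the process: the graph on `Fin n` formed by the first `m`
edges of the ordering `ω`. -/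
def graphUpTo {n : ℕ} (ω : EOrd n) (m : ℕ) : SimpleGraph (Fin n) :=
  SimpleGraph.fromEdgeSet {e | ∃ i : Fin (n.choose 2), (i : ℕ) < m ∧ (ω i).1 = e}

/-- `e_m(S)`: the number of edges of `G_m` with both endpoints in `S`. -/
noncomputable def eIn {n : ℕ} (ω : EOrd n) (m : ℕ) (S : Finset (Fin n)) : ℕ :=
  Set.ncard {i : Fin (n.choose 2) | (i : ℕ) < m ∧ ∀ v ∈ (ω i).1, v ∈ S}

/-- `m` lies in the interval `[(n/2)(log n − log log n), (n/2)(log n + log log n)]`. -/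
def mInRange (n m : ℕ) : Prop :=
  (n : ℝ) / 2 * (Real.log n - Real.log (Real.log n)) ≤ m ∧
    (m : ℝ) ≤ (n : ℝ) / 2 * (Real.log n + Real.log (Real.log n))

section Aux
open Finset
open scoped Classical

lemma log_quad (lam : ℝ) (h0 : 0 ≤ lam) (h1 : lam ≤ 1) :
    lam / (1 + lam) + lam ^ 2 / 12 ≤ Real.log (1 + lam) := by
  have key : ∀ x : ℝ, 0 ≤ x → x / (1 + x) ≤ Real.log (1 + x) := by
    intro x hx
    have hpos : (0:ℝ) < 1 + x := by linarith
    have h := Real.log_le_sub_one_of_pos (x := (1+x)⁻¹) (by positivity)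
    rw [Real.log_inv] at h
    have h2 : -(1 + x)⁻¹ + 1 ≤ Real.log (1+x) := by linarith
    calc x / (1+x) = -(1+x)⁻¹ + 1 := by field_simp; ring
      _ ≤ _ := h2
  have hpos2 : (0:ℝ) < 2 + lam := by linarith
  have hpos3 : (0:ℝ) < 1 + lam := by linarith
  have hpos4 : (0:ℝ) < 2 + 2*lam := by linarith
  have hpos5 : (0:ℝ) < 1 + lam/2 := by linarith
  have hpos6 : (0:ℝ) < 1 + lam/(2+lam) := by positivity
  have split : Real.log (1 + lam) = Real.log (1 + lam/2) + Real.log (1 + lam/(2+lam)) := by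
    rw [← Real.log_mul (by linarith) (by positivity)]
    congr 1
    field_simp
    ring
  have A := key (lam/2) (by linarith)
  have B := key (lam/(2+lam)) (by positivity)
  have e1 : lam/2 / (1 + lam/2) = lam/(2+lam) := by
    rw [div_eq_div_iff hpos5.ne' hpos2.ne']
    ring
  have e2 : lam/(2+lam) / (1 + lam/(2+lam)) = lam/(2+2*lam) := by
    rw [div_eq_div_iff hpos6.ne' hpos4.ne', mul_add]
    field_simp
    ring
  rw [split]
  rw [e1] at A
  rw [e2] at B
  have e3 : lam/(2+lam) + lam/(2+2*lam) - lam/(1+lam) = lam^2/(2*(2+lam)*(1+lam)) := by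
    field_simp
    ring
  have e4 : lam^2/12 ≤ lam^2/(2*(2+lam)*(1+lam)) := by
    apply div_le_div_of_nonneg_left (sq_nonneg lam) (by positivity)
    nlinarith
  linarith


noncomputable def eMin (e : Sym2 (Fin n)) : Fin n :=
  Sym2.lift ⟨fun a b => min a b, fun a b => min_comm a b⟩ e
noncomputable def eMax (e : Sym2 (Fin n)) : Fin n :=
  Sym2.lift ⟨fun a b => max a b, fun a b => max_comm a b⟩ e

lemma eMinMax (e : Sym2 (Fin n)) : s(eMin e, eMax e) = e := by
  induction e using Sym2.ind with
  | _ a b =>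
    simp only [eMin, eMax, Sym2.lift_mk]
    rcases le_total a b with h | h
    · rw [min_eq_left h, max_eq_right h]
    · rw [min_eq_right h, max_eq_left h, Sym2.eq_swap]

lemma eMin_le_eMax (e : Sym2 (Fin n)) : eMin e ≤ eMax e := by
  induction e using Sym2.ind with
  | _ a b => simpa [eMin, eMax] using min_le_max

lemma eMin_mem (e : Sym2 (Fin n)) : eMin e ∈ e := by
  induction e using Sym2.ind with
  | _ a b =>
    simp only [eMin, Sym2.lift_mk, Sym2.mem_iff]
    rcases le_total a b with h | h
    · left; exact min_eq_left h
    · right; exact min_eq_right h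

lemma eMax_mem (e : Sym2 (Fin n)) : eMax e ∈ e := by
  induction e using Sym2.ind with
  | _ a b =>
    simp only [eMax, Sym2.lift_mk, Sym2.mem_iff]
    rcases le_total a b with h | h
    · right; exact max_eq_right h
    · left; exact max_eq_left h

lemma eMin_lt_eMax (f : EdgeKn n) : eMin f.1 < eMax f.1 := by
  rcases lt_or_eq_of_le (eMin_le_eMax f.1) with h | h
  · exact h
  · exfalso; apply f.2
    rw [← eMinMax f.1, h]
    simp [Sym2.isDiag_iff_proj_eq]

/-- the set of potential edges with both endpoints in `S` -/
noncomputable def edgesIn (n : ℕ) (S : Finset (Fin n)) : Finset (EdgeKn n) :=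
  univ.filter (fun f => ∀ v ∈ f.1, v ∈ S)

lemma two_mul_card_edgesIn (S : Finset (Fin n)) :
    2 * (edgesIn n S).card ≤ S.card * S.card := by
  classical
  set P := (S ×ˢ S).filter (fun p => p.1 < p.2) with hP
  set Q := (S ×ˢ S).filter (fun p => p.2 < p.1) with hQ
  have hmem : ∀ f ∈ edgesIn n S, eMin f.1 ∈ S ∧ eMax f.1 ∈ S := by
    intro f hf
    simp only [edgesIn, mem_filter] at hf
    exact ⟨hf.2 _ (eMin_mem _), hf.2 _ (eMax_mem _)⟩
  have key : ∀ (f g : EdgeKn n), eMin f.1 = eMin g.1 → eMax f.1 = eMax g.1 → f = g := by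
    intro f g h1 h2
    have : s(eMin f.1, eMax f.1) = s(eMin g.1, eMax g.1) := by rw [h1, h2]
    rw [eMinMax, eMinMax] at this
    exact Subtype.ext this
  have h1 : (edgesIn n S).card ≤ P.card := by
    apply Finset.card_le_card_of_injOn (fun f => (eMin f.1, eMax f.1))
    · intro f hf
      simp only [hP, mem_coe, mem_filter, mem_product]
      exact ⟨⟨(hmem f hf).1, (hmem f hf).2⟩, eMin_lt_eMax f⟩
    · intro f _ g _ h
      simp only [Prod.mk.injEq] at h
      exact key f g h.1 h.2
  have h2 : (edgesIn n S).card ≤ Q.card := by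
    apply Finset.card_le_card_of_injOn (fun f => (eMax f.1, eMin f.1))
    · intro f hf
      simp only [hQ, mem_coe, mem_filter, mem_product]
      exact ⟨⟨(hmem f hf).2, (hmem f hf).1⟩, eMin_lt_eMax f⟩
    · intro f _ g _ h
      simp only [Prod.mk.injEq] at h
      exact key f g h.2 h.1
  have hdisj : Disjoint P Q := by
    rw [Finset.disjoint_left]
    intro p hp hq
    simp only [hP, hQ, mem_filter] at hp hq
    exact absurd (hp.2.trans hq.2) (lt_irrefl _)
  have h3 : P.card + Q.card ≤ (S ×ˢ S).card := by
    rw [← Finset.card_union_of_disjoint hdisj]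
    exact Finset.card_le_card (Finset.union_subset (filter_subset _ _) (filter_subset _ _))
  calc 2 * (edgesIn n S).card = (edgesIn n S).card + (edgesIn n S).card := two_mul _
    _ ≤ P.card + Q.card := Nat.add_le_add h1 h2
    _ ≤ (S ×ˢ S).card := h3
    _ = S.card * S.card := card_product S S


/-- orderings in which every edge of `T` appears among the first `M` edges -/
noncomputable def OmT (n M : ℕ) (T : Finset (EdgeKn n)) : Finset (EOrd n) :=
  univ.filter (fun ω => ∀ f ∈ T, ((ω.symm f : Fin (n.choose 2)) : ℕ) < M)

lemma switch (T : Finset (EdgeKn n)) (f₀ : EdgeKn n) (hf₀ : f₀ ∉ T) :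
    (OmT n M (insert f₀ T)).card * (n.choose 2) ≤ (OmT n M T).card * M := by
  set N := n.choose 2
  set FM : Finset (Fin N) := univ.filter (fun i => (i : ℕ) < M) with hFM
  have hFMcard : FM.card ≤ M := by
    have := Finset.card_le_card_of_injOn (s := FM) (t := Finset.range M) (fun i => (i : ℕ))
      (by intro i hi
          simp only [hFM, mem_coe, mem_filter, mem_univ, true_and] at hi
          exact Finset.mem_range.mpr hi)
      (by intro i _ j _ h
          exact Fin.ext (by simpa using h))
    simpa using this
  have key : ((OmT n M (insert f₀ T)) ×ˢ (univ : Finset (Fin N))).card ≤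
      ((OmT n M T) ×ˢ FM).card := by
    apply Finset.card_le_card_of_injOn
      (fun p => ((Equiv.swap (p.1.symm f₀) p.2).trans p.1, p.1.symm f₀))
    · rintro ⟨ω, i⟩ hp
      simp only [mem_coe, mem_product, OmT, mem_filter, mem_univ, true_and] at hp ⊢
      set a := ω.symm f₀ with ha
      constructor
      · intro f hf
        have hfne : f ≠ f₀ := fun h => hf₀ (h ▸ hf)
        have hb : ((Equiv.swap a i).trans ω).symm f = Equiv.swap a i (ω.symm f) := by
          simp [Equiv.symm_trans_apply]
        rw [hb, Equiv.swap_apply_def]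
        have hba : ω.symm f ≠ a := by
          intro h; exact hfne (by simpa using congrArg ω (h.trans ha))
        rw [if_neg hba]
        split_ifs with h
        · exact hp.1 f₀ (mem_insert_self _ _)
        · exact hp.1 f (mem_insert_of_mem hf)
      · simp only [hFM, mem_filter, mem_univ, true_and]
        exact hp.1 f₀ (mem_insert_self _ _)
    · rintro ⟨ω, i⟩ hp ⟨ω', i'⟩ hp' heq
      simp only [Prod.mk.injEq] at heq
      obtain ⟨h1, h2⟩ := heq
      have hi : ((Equiv.swap (ω.symm f₀) i).trans ω).symm f₀ = i := by
        simp [Equiv.symm_trans_apply]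
      have hi' : ((Equiv.swap (ω'.symm f₀) i').trans ω').symm f₀ = i' := by
        simp [Equiv.symm_trans_apply]
      have hii' : i = i' := by rw [← hi, ← hi', h1]
      have hω : ω = ω' := by
        have := congrArg (fun e => (Equiv.swap (ω.symm f₀) i).trans e) h1
        rw [h2, hii'] at this
        apply Equiv.ext; intro x
        have h3 := congrArg (fun e => e x) this
        simpa [Equiv.trans_apply, Equiv.swap_apply_self] using h3
      exact Prod.ext hω hii'
  rw [card_product, card_product, card_univ, Fintype.card_fin] at key
  calc (OmT n M (insert f₀ T)).card * N ≤ (OmT n M T).card * FM.card := key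
    _ ≤ (OmT n M T).card * M := Nat.mul_le_mul_left _ hFMcard

lemma OmT_bound (T : Finset (EdgeKn n)) :
    (OmT n M T).card * (n.choose 2) ^ T.card ≤ Fintype.card (EOrd n) * M ^ T.card := by
  induction T using Finset.induction_on with
  | empty =>
    simp only [card_empty, pow_zero, mul_one]
    apply Finset.card_le_card
    intro ω _; simp [OmT]
  | @insert f₀ T hf ih =>
    rw [card_insert_of_notMem hf, pow_succ, pow_succ, ← mul_assoc, ← mul_assoc]
    calc (OmT n M (insert f₀ T)).card * (n.choose 2) ^ T.card * (n.choose 2)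
        = ((OmT n M (insert f₀ T)).card * (n.choose 2)) * (n.choose 2) ^ T.card := by ring
      _ ≤ ((OmT n M T).card * M) * (n.choose 2) ^ T.card := Nat.mul_le_mul_right _ (switch T f₀ hf)
      _ = ((OmT n M T).card * (n.choose 2) ^ T.card) * M := by ring
      _ ≤ (Fintype.card (EOrd n) * M ^ T.card) * M := Nat.mul_le_mul_right _ ih
      _ = Fintype.card (EOrd n) * M ^ T.card * M := by ring


noncomputable def Xcnt (n M : ℕ) (F : Finset (EdgeKn n)) (ω : EOrd n) : ℕ :=
  (F.filter (fun f => ((ω.symm f : Fin (n.choose 2)) : ℕ) < M)).card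

lemma OmT_bound_real (hN : 0 < n.choose 2) (T : Finset (EdgeKn n)) :
    ((OmT n M T).card : ℝ) ≤ (Fintype.card (EOrd n) : ℝ) * ((M : ℝ) / (n.choose 2 : ℝ)) ^ T.card := by
  have h := OmT_bound (M := M) T
  have hNpos : (0 : ℝ) < ((n.choose 2 : ℕ) : ℝ) ^ T.card := by positivity
  rw [div_pow, ← mul_div_assoc, le_div_iff₀ hNpos]
  calc ((OmT n M T).card : ℝ) * ((n.choose 2 : ℕ) : ℝ) ^ T.card
      = (((OmT n M T).card * (n.choose 2) ^ T.card : ℕ) : ℝ) := by push_cast; ring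
    _ ≤ ((Fintype.card (EOrd n) * M ^ T.card : ℕ) : ℝ) := Nat.cast_le.mpr h
    _ = (Fintype.card (EOrd n) : ℝ) * (M : ℝ) ^ T.card := by push_cast; ring

lemma mgf (hN : 0 < n.choose 2) (F : Finset (EdgeKn n)) (lam : ℝ) (hlam : 0 ≤ lam) :
    ∑ ω : EOrd n, (1 + lam) ^ (Xcnt n M F ω)
      ≤ (Fintype.card (EOrd n) : ℝ) * Real.exp (lam * M * F.card / (n.choose 2 : ℝ)) := by
  set N := n.choose 2
  have step2 : ∀ ω : EOrd n, ((1 + lam) ^ (Xcnt n M F ω) : ℝ)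
      = ∑ T ∈ F.powerset, lam ^ T.card *
          (if (∀ f ∈ T, ((ω.symm f : Fin N) : ℕ) < M) then (1:ℝ) else 0) := by
    intro ω
    have step1 : ((1 + lam) ^ (Xcnt n M F ω) : ℝ)
        = ∏ f ∈ F, (lam * (if ((ω.symm f : Fin N) : ℕ) < M then (1:ℝ) else 0) + 1) := by
      have : ∀ f : EdgeKn n,
          (lam * (if ((ω.symm f : Fin N) : ℕ) < M then (1:ℝ) else 0) + 1)
          = (if ((ω.symm f : Fin N) : ℕ) < M then (1 + lam : ℝ) else 1) := by
        intro f; split_ifs <;> ring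
      rw [Finset.prod_congr rfl (fun f _ => this f), Finset.prod_ite, Finset.prod_const,
        Finset.prod_const, one_pow, mul_one, Xcnt]
    rw [step1, Finset.prod_add]
    refine Finset.sum_congr rfl (fun T _ => ?_)
    rw [Finset.prod_const_one, mul_one, Finset.prod_mul_distrib, Finset.prod_const,
      Finset.prod_boole]
    congr 1
    split_ifs <;> rfl
  calc ∑ ω : EOrd n, ((1 + lam) ^ (Xcnt n M F ω) : ℝ)
      = ∑ ω : EOrd n, ∑ T ∈ F.powerset, lam ^ T.card *
          (if (∀ f ∈ T, ((ω.symm f : Fin N) : ℕ) < M) then (1:ℝ) else 0) :=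
        Finset.sum_congr rfl (fun ω _ => step2 ω)
    _ = ∑ T ∈ F.powerset, lam ^ T.card * ((OmT n M T).card : ℝ) := by
        rw [Finset.sum_comm]
        refine Finset.sum_congr rfl (fun T _ => ?_)
        rw [← Finset.mul_sum, Finset.sum_boole]
        congr 1
    _ ≤ ∑ T ∈ F.powerset, lam ^ T.card *
          ((Fintype.card (EOrd n) : ℝ) * ((M : ℝ) / (N : ℝ)) ^ T.card) :=
        Finset.sum_le_sum (fun T _ =>
          mul_le_mul_of_nonneg_left (OmT_bound_real hN T) (pow_nonneg hlam _))
    _ = (Fintype.card (EOrd n) : ℝ) *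
          ∑ T ∈ F.powerset, (∏ _f ∈ T, (lam * ((M : ℝ) / (N : ℝ)))) * ∏ _f ∈ F \ T, (1:ℝ) := by
        rw [Finset.mul_sum]
        refine Finset.sum_congr rfl (fun T _ => ?_)
        rw [Finset.prod_const, Finset.prod_const_one, mul_one, mul_pow]; ring
    _ = (Fintype.card (EOrd n) : ℝ) * (lam * ((M : ℝ) / (N : ℝ)) + 1) ^ F.card := by
        rw [← Finset.prod_add, Finset.prod_const]
    _ ≤ (Fintype.card (EOrd n) : ℝ) * Real.exp (lam * M * F.card / (N : ℝ)) := by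
        apply mul_le_mul_of_nonneg_left _ (Nat.cast_nonneg _)
        have h1 : (lam * ((M : ℝ) / (N : ℝ)) + 1) ^ F.card
            ≤ (Real.exp (lam * ((M : ℝ) / (N : ℝ)))) ^ F.card := by
          apply pow_le_pow_left₀ _ (Real.add_one_le_exp _)
          positivity
        refine h1.trans ?_
        rw [← Real.exp_nat_mul]
        apply le_of_eq
        congr 1
        ring
lemma tail_bound (hN : 0 < n.choose 2) (F : Finset (EdgeKn n)) (lam r : ℝ)
    (hlam : 0 ≤ lam) :
    ((univ.filter (fun ω : EOrd n => r ≤ (Xcnt n M F ω : ℝ))).card : ℝ)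
      ≤ (Fintype.card (EOrd n) : ℝ) *
        Real.exp (lam * M * F.card / (n.choose 2 : ℝ) - r * Real.log (1 + lam)) := by
  set B := univ.filter (fun ω : EOrd n => r ≤ (Xcnt n M F ω : ℝ)) with hB
  have hpos : (0:ℝ) < 1 + lam := by linarith
  have h1 : ∀ ω ∈ B, Real.exp (r * Real.log (1 + lam)) ≤ ((1 + lam) ^ (Xcnt n M F ω) : ℝ) := by
    intro ω hω
    simp only [hB, mem_filter, mem_univ, true_and] at hω
    calc Real.exp (r * Real.log (1 + lam)) = (1 + lam) ^ r := by
          rw [Real.rpow_def_of_pos hpos, mul_comm]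
      _ ≤ (1 + lam) ^ ((Xcnt n M F ω : ℝ)) :=
          Real.rpow_le_rpow_of_exponent_le (by linarith) hω
      _ = (1 + lam) ^ (Xcnt n M F ω) := Real.rpow_natCast _ _
  have h2 : (B.card : ℝ) * Real.exp (r * Real.log (1 + lam)) ≤
      (Fintype.card (EOrd n) : ℝ) * Real.exp (lam * M * F.card / (n.choose 2 : ℝ)) := by
    calc (B.card : ℝ) * Real.exp (r * Real.log (1 + lam))
        = ∑ _ω ∈ B, Real.exp (r * Real.log (1 + lam)) := by
          rw [Finset.sum_const, nsmul_eq_mul]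
      _ ≤ ∑ ω ∈ B, ((1 + lam) ^ (Xcnt n M F ω) : ℝ) := Finset.sum_le_sum h1
      _ ≤ ∑ ω : EOrd n, ((1 + lam) ^ (Xcnt n M F ω) : ℝ) :=
          Finset.sum_le_sum_of_subset_of_nonneg (subset_univ B) (fun ω _ _ => by positivity)
      _ ≤ _ := mgf hN F lam hlam
  have hexp : (0:ℝ) < Real.exp (r * Real.log (1 + lam)) := Real.exp_pos _
  rw [Real.exp_sub, ← mul_div_assoc, le_div_iff₀ hexp]
  exact h2



/-- threshold -/
noncomputable def rS (n : ℕ) (S : Finset (Fin n)) : ℝ :=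
  max ((n : ℝ) * Real.log n / 1000)
    (((S.card : ℝ)) ^ 2 * (1 + Real.log n ^ (-(2:ℝ)/5)) * Real.log n /
      (2 * (n : ℝ) * (1 - 5 * Real.log (Real.log n) / Real.log n)))

noncomputable def MM (n : ℕ) : ℕ := ⌊(n : ℝ) / 2 * (Real.log n + Real.log (Real.log n))⌋₊

noncomputable def Bad (n : ℕ) (S : Finset (Fin n)) : Finset (EOrd n) :=
  univ.filter (fun ω => rS n S ≤ (Xcnt n (MM n) (edgesIn n S) ω : ℝ))

lemma log_le_two_sqrt {x : ℝ} (hx : 1 ≤ x) : Real.log x ≤ 2 * Real.sqrt x := by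
  have h1 : Real.log x = 2 * Real.log (Real.sqrt x) := by
    rw [Real.log_sqrt (by linarith)]; ring
  have h2 := Real.log_le_sub_one_of_pos (Real.sqrt_pos.mpr (by linarith : (0:ℝ) < x))
  linarith

lemma log_le_tenth {x : ℝ} (hx : 400 ≤ x) : Real.log x ≤ x / 10 := by
  have h0 : (20:ℝ) ≤ Real.sqrt x := by
    rw [show (20:ℝ) = Real.sqrt 400 by
      rw [show (400:ℝ) = 20 ^ 2 by norm_num, Real.sqrt_sq (by norm_num : (0:ℝ) ≤ 20)]]
    exact Real.sqrt_le_sqrt hx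
  have h1 := log_le_two_sqrt (by linarith : (1:ℝ) ≤ x)
  have h2 : Real.sqrt x * Real.sqrt x = x := Real.mul_self_sqrt (by linarith)
  nlinarith

lemma prob_le_one {Ω : Type*} [Fintype Ω] (p : Ω → Prop) : prob p ≤ 1 := by
  unfold prob
  rcases Nat.eq_zero_or_pos (Fintype.card Ω) with h | h
  · rw [h]; simp
  · apply div_le_one_of_le₀
    · exact Nat.cast_le.mpr ((Finset.card_filter_le _ _).trans (le_of_eq Finset.card_univ))
    · positivity

end Aux

section Aux2
open Finset
open scoped Classical


lemma key1' {L LL : ℝ} (hL : 0 < L) (hLL0 : 0 ≤ LL) :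
    (L + LL) * (1 - 5 * LL / L) ≤ L := by
  have expand : (L + LL) * (1 - 5 * LL / L) = ((L + LL) * (L - 5 * LL)) / L := by
    field_simp
  rw [expand, div_le_iff₀ hL]
  nlinarith

lemma key2' {x nn : ℝ} (hx1 : x ≤ 1) (hnx : 4 ≤ nn * x) :
    (1 + x / 2) * nn ≤ (1 + x) * (nn - 1) := by nlinarith

lemma four_log_le {y L' s' : ℝ} (h1 : s' * s' = y) (h2 : 8 ≤ s') (h3 : L' ≤ 2 * s') :
    4 * L' ≤ y := by nlinarith

lemma keyB {e nn L LL M' F' s2 : ℝ} (he0 : 0 ≤ e) (he1 : e ≤ 1) (hne : 4 ≤ nn * e)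
    (hL : 0 < L) (hLL0 : 0 ≤ LL) (hM0 : 0 ≤ M') (hM : M' ≤ nn / 2 * (L + LL))
    (hF : 0 ≤ F') (hF2 : F' ≤ s2 / 2) (hs2 : 0 ≤ s2)
    (hθ : 5 * LL / L ≤ 1 / 2) (hnn : 64 ≤ nn) :
    (1 + e / 2) * M' * F' * (2 * nn * (1 - 5 * LL / L))
      ≤ s2 * (1 + e) * L * (nn * (nn - 1) / 2) := by
  have h1θ : (0:ℝ) < 1 - 5 * LL / L := by linarith
  have k1 : (L + LL) * (1 - 5 * LL / L) ≤ L := key1' hL hLL0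
  have k2 : (1 + e / 2) * nn ≤ (1 + e) * (nn - 1) := key2' he1 hne
  have hq : ((1 + e / 2) * nn) * ((L + LL) * (1 - 5 * LL / L))
      ≤ ((1 + e) * (nn - 1)) * L :=
    mul_le_mul k2 k1 (mul_nonneg (by linarith) h1θ.le)
      (mul_nonneg (by linarith) (by linarith))
  have p1 : M' * F' ≤ (nn / 2 * (L + LL)) * (s2 / 2) :=
    mul_le_mul hM hF2 hF (by nlinarith)
  have A1 := mul_le_mul_of_nonneg_left p1
    (show (0:ℝ) ≤ (1 + e / 2) * (2 * nn * (1 - 5 * LL / L)) by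
      apply mul_nonneg (by linarith)
      apply mul_nonneg (by linarith) h1θ.le)
  have B1 := mul_le_mul_of_nonneg_left hq
    (show (0:ℝ) ≤ s2 * nn / 2 by nlinarith)
  nlinarith [A1, B1]

lemma hbig' {nn t c : ℝ} (h : 96000 ≤ t) (hc : c ≤ 1) (hn : 0 ≤ nn) :
    nn * (c + 1) ≤ nn * t / 48000 := by nlinarith

set_option maxHeartbeats 2000000 in
lemma perS (n : ℕ) (hn : 64 ≤ n) (hL : (96000:ℝ)^5 ≤ Real.log n) (S : Finset (Fin n)) :
    ((Bad n S).card : ℝ) ≤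
      (Fintype.card (EOrd n) : ℝ) * Real.exp (-(n:ℝ) * Real.log 2 - n) := by
  have hn2 : 2 ≤ n := by omega
  have hnR : (64:ℝ) ≤ (n:ℝ) := by exact_mod_cast hn
  have hn0 : (0:ℝ) < n := by linarith
  have hL1 : (1:ℝ) ≤ Real.log n := le_trans (by norm_num) hL
  have hLpos : (0:ℝ) < Real.log n := by linarith
  have hLL0 : (0:ℝ) ≤ Real.log (Real.log n) := Real.log_nonneg hL1
  have hL400 : (400:ℝ) ≤ Real.log n := le_trans (by norm_num) hL
  have hLL : Real.log (Real.log n) ≤ Real.log n / 10 := log_le_tenth hL400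
  have hθ : 5 * Real.log (Real.log n) / Real.log n ≤ 1/2 := by
    rw [div_le_iff₀ hLpos]; linarith
  have hθ0 : 0 ≤ 5 * Real.log (Real.log n) / Real.log n := by positivity
  have h1θ : (0:ℝ) < 1 - 5 * Real.log (Real.log n) / Real.log n := by linarith
  have heps_pos : (0:ℝ) < Real.log n ^ (-(2:ℝ)/5) := Real.rpow_pos_of_pos hLpos _
  have heps1 : Real.log n ^ (-(2:ℝ)/5) ≤ 1 :=
    Real.rpow_le_one_of_one_le_of_nonpos hL1 (by norm_num)
  have hepsLinv : (Real.log n)⁻¹ ≤ Real.log n ^ (-(2:ℝ)/5) := by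
    rw [show (Real.log n)⁻¹ = Real.log n ^ (-1:ℝ) by rw [Real.rpow_neg_one]]
    exact Real.rpow_le_rpow_of_exponent_le hL1 (by norm_num)
  have hlogn2 : Real.log n ≤ 2 * Real.sqrt n := log_le_two_sqrt (by linarith)
  have hsqrtn : (8:ℝ) ≤ Real.sqrt n := by
    rw [show (8:ℝ) = Real.sqrt (8^2) by rw [Real.sqrt_sq (by norm_num : (0:ℝ) ≤ 8)]]
    exact Real.sqrt_le_sqrt (by norm_num; linarith)
  have hmssqrt : Real.sqrt n * Real.sqrt n = (n:ℝ) := Real.mul_self_sqrt (by positivity)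
  have hneps : (4:ℝ) ≤ n * (Real.log n ^ (-(2:ℝ)/5)) := by
    have h1 : (n:ℝ) * (Real.log n)⁻¹ ≤ n * (Real.log n ^ (-(2:ℝ)/5)) :=
      mul_le_mul_of_nonneg_left hepsLinv (by positivity)
    have h2 : (4:ℝ) ≤ (n:ℝ) * (Real.log n)⁻¹ := by
      rw [← div_eq_mul_inv, le_div_iff₀ hLpos]
      linarith [four_log_le hmssqrt hsqrtn hlogn2]
    linarith
  have hD : (96000:ℝ) ≤ Real.log n ^ ((1:ℝ)/5) := by
    have h1 : ((96000:ℝ)^5) ^ ((1:ℝ)/5) ≤ Real.log n ^ ((1:ℝ)/5) :=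
      Real.rpow_le_rpow (by positivity) hL (by norm_num)
    rw [← Real.rpow_natCast (96000:ℝ) 5, ← Real.rpow_mul (by norm_num : (0:ℝ) ≤ 96000)] at h1
    norm_num at h1
    exact h1
  have hN : 0 < n.choose 2 := Nat.choose_pos hn2
  have hNR : (0:ℝ) < ((n.choose 2 : ℕ) : ℝ) := by exact_mod_cast hN
  have hNcast : ((n.choose 2 : ℕ) : ℝ) = (n:ℝ) * ((n:ℝ) - 1) / 2 := Nat.cast_choose_two ℝ n
  have hM : ((MM n : ℕ) : ℝ) ≤ (n:ℝ)/2 * (Real.log n + Real.log (Real.log n)) := by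
    unfold MM
    exact Nat.floor_le (by positivity)
  have hr0 : 0 ≤ rS n S := by
    refine le_trans ?_ (le_max_left _ _)
    positivity
  have hlam0 : (0:ℝ) ≤ Real.log n ^ (-(2:ℝ)/5) / 2 := by positivity
  have hlam1 : Real.log n ^ (-(2:ℝ)/5) / 2 ≤ 1 := by linarith
  have htail := tail_bound (M := MM n) hN (edgesIn n S)
    (Real.log n ^ (-(2:ℝ)/5) / 2) (rS n S) hlam0
  have hBadcard : ((Bad n S).card : ℝ) ≤ (Fintype.card (EOrd n) : ℝ) *
      Real.exp ((Real.log n ^ (-(2:ℝ)/5) / 2) * ((MM n : ℕ) : ℝ) * ((edgesIn n S).card : ℝ) /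
          ((n.choose 2 : ℕ) : ℝ)
        - rS n S * Real.log (1 + Real.log n ^ (-(2:ℝ)/5) / 2)) := htail
  refine le_trans hBadcard
    (mul_le_mul_of_nonneg_left (Real.exp_le_exp.mpr ?_) (Nat.cast_nonneg _))
  clear hBadcard htail
  -- exponent bound
  have hlog := log_quad (Real.log n ^ (-(2:ℝ)/5) / 2) hlam0 hlam1
  have hFle : ((edgesIn n S).card : ℝ) ≤ ((S.card:ℝ))^2 / 2 := by
    have h := two_mul_card_edgesIn S
    have h2 : ((2 * (edgesIn n S).card : ℕ) : ℝ) ≤ ((S.card * S.card : ℕ) : ℝ) := Nat.cast_le.mpr h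
    push_cast at h2
    nlinarith [h2, sq_nonneg ((S.card:ℝ))]
  have hc : (0:ℝ) < 2 * (n:ℝ) * (1 - 5 * Real.log (Real.log n) / Real.log n) :=
    mul_pos (by linarith) h1θ
  have hB1 : ((1 + Real.log n ^ (-(2:ℝ)/5) / 2) * ((MM n : ℕ) : ℝ) * ((edgesIn n S).card : ℝ)) / ((n.choose 2 : ℕ) : ℝ)
      ≤ ((S.card:ℝ))^2 * (1 + Real.log n ^ (-(2:ℝ)/5)) * Real.log n /
        (2 * (n:ℝ) * (1 - 5 * Real.log (Real.log n) / Real.log n)) := by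
    rw [div_le_div_iff₀ hNR hc, hNcast]
    exact keyB heps_pos.le heps1 hneps hLpos hLL0 (Nat.cast_nonneg _) hM
      (Nat.cast_nonneg _) hFle (by positivity) hθ hnR
  have hr2 : ((S.card:ℝ))^2 * (1 + Real.log n ^ (-(2:ℝ)/5)) * Real.log n /
      (2 * (n:ℝ) * (1 - 5 * Real.log (Real.log n) / Real.log n)) ≤ rS n S := by
    unfold rS
    exact le_max_right _ _
  have h1e : (0:ℝ) < 1 + Real.log n ^ (-(2:ℝ)/5)/2 := by linarith
  have hstep : (Real.log n ^ (-(2:ℝ)/5)/2) * ((MM n : ℕ) : ℝ) * ((edgesIn n S).card : ℝ) / ((n.choose 2 : ℕ) : ℝ)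
      ≤ rS n S * ((Real.log n ^ (-(2:ℝ)/5)/2) / (1 + Real.log n ^ (-(2:ℝ)/5)/2)) := by
    have e0 : (Real.log n ^ (-(2:ℝ)/5)/2) * ((MM n : ℕ) : ℝ) * ((edgesIn n S).card : ℝ) / ((n.choose 2 : ℕ) : ℝ)
        = ((Real.log n ^ (-(2:ℝ)/5)/2) / (1 + Real.log n ^ (-(2:ℝ)/5)/2)) *
          (((1 + Real.log n ^ (-(2:ℝ)/5)/2) * ((MM n : ℕ) : ℝ) * ((edgesIn n S).card : ℝ)) / ((n.choose 2 : ℕ) : ℝ)) := by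
      field_simp
    rw [e0]
    have hfrac0 : (0:ℝ) ≤ (Real.log n ^ (-(2:ℝ)/5)/2) / (1 + Real.log n ^ (-(2:ℝ)/5)/2) :=
      div_nonneg hlam0 h1e.le
    calc ((Real.log n ^ (-(2:ℝ)/5)/2) / (1 + Real.log n ^ (-(2:ℝ)/5)/2)) *
          (((1 + Real.log n ^ (-(2:ℝ)/5)/2) * ((MM n : ℕ) : ℝ) * ((edgesIn n S).card : ℝ)) / ((n.choose 2 : ℕ) : ℝ))
        ≤ ((Real.log n ^ (-(2:ℝ)/5)/2) / (1 + Real.log n ^ (-(2:ℝ)/5)/2)) * (rS n S) :=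
          mul_le_mul_of_nonneg_left (le_trans hB1 hr2) hfrac0
      _ = rS n S * ((Real.log n ^ (-(2:ℝ)/5)/2) / (1 + Real.log n ^ (-(2:ℝ)/5)/2)) := mul_comm _ _
  have hlogr : rS n S * ((Real.log n ^ (-(2:ℝ)/5)/2) / (1 + Real.log n ^ (-(2:ℝ)/5)/2))
        + rS n S * ((Real.log n ^ (-(2:ℝ)/5)/2)^2/12)
      ≤ rS n S * Real.log (1 + Real.log n ^ (-(2:ℝ)/5)/2) := by
    rw [← mul_add]
    exact mul_le_mul_of_nonneg_left hlog hr0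
  have hr1 : (n:ℝ) * Real.log n / 1000 ≤ rS n S := by
    unfold rS
    exact le_max_left _ _
  have hr1' : (n:ℝ) * Real.log n / 1000 * ((Real.log n ^ (-(2:ℝ)/5)/2)^2/12)
      ≤ rS n S * ((Real.log n ^ (-(2:ℝ)/5)/2)^2/12) :=
    mul_le_mul_of_nonneg_right hr1 (by positivity)
  have heps2 : (Real.log n ^ (-(2:ℝ)/5))^2 * Real.log n = Real.log n ^ ((1:ℝ)/5) := by
    have e1 : (Real.log n ^ (-(2:ℝ)/5))^2 = Real.log n ^ (-(4:ℝ)/5) := by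
      rw [← Real.rpow_natCast (Real.log n ^ (-(2:ℝ)/5)) 2, ← Real.rpow_mul hLpos.le]
      norm_num
    rw [e1]
    calc Real.log n ^ (-(4:ℝ)/5) * Real.log n
        = Real.log n ^ (-(4:ℝ)/5) * Real.log n ^ (1:ℝ) := by rw [Real.rpow_one]
      _ = Real.log n ^ (-(4:ℝ)/5 + 1) := (Real.rpow_add hLpos _ _).symm
      _ = Real.log n ^ ((1:ℝ)/5) := by norm_num
  have hval : (n:ℝ) * Real.log n / 1000 * ((Real.log n ^ (-(2:ℝ)/5)/2)^2/12)
      = (n:ℝ) * ((Real.log n ^ (-(2:ℝ)/5))^2 * Real.log n) / 48000 := by ring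
  have hlog2 : Real.log 2 ≤ 1 := by
    have := Real.log_le_sub_one_of_pos (show (0:ℝ) < 2 by norm_num)
    linarith
  have hbig : (n:ℝ) * (Real.log 2 + 1) ≤ (n:ℝ) * ((Real.log n ^ (-(2:ℝ)/5))^2 * Real.log n) / 48000 := by
    rw [heps2]
    exact hbig' hD hlog2 hn0.le
  linarith [hstep, hlogr, hr1', hval, hbig]


set_option maxHeartbeats 4000000 in
lemma main_lb (n : ℕ) (hn : 64 ≤ n) (hL : (96000:ℝ)^5 ≤ Real.log n) :
    1 - Real.exp (-(n:ℝ)) ≤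
      prob (Ω := EOrd n) (fun ω =>
        ∀ m : ℕ, mInRange n m →
          ∀ a : ℝ, (1 / 1000 : ℝ) ≤ a → a ≤ m / (2 * n * Real.log n) →
            ∀ A : Finset (Fin (n.choose 2)),
              (∀ i ∈ A, (i : ℕ) < m) →
              a * n * Real.log n ≤ A.card →
                Real.sqrt (2 * a * (1 - 5 * Real.log (Real.log n) / Real.log n) /
                    (1 + Real.log n ^ (-(2 : ℝ) / 5))) * n ≤
                  Set.ncard {v : Fin n | ∃ i ∈ A, v ∈ (ω i).1}) := by
  have hn2 : 2 ≤ n := by omega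
  have hnR : (64:ℝ) ≤ (n:ℝ) := by exact_mod_cast hn
  have hn0 : (0:ℝ) < n := by linarith
  have hL1 : (1:ℝ) ≤ Real.log n := le_trans (by norm_num) hL
  have hLpos : (0:ℝ) < Real.log n := by linarith
  have hLL0 : (0:ℝ) ≤ Real.log (Real.log n) := Real.log_nonneg hL1
  have hL400 : (400:ℝ) ≤ Real.log n := le_trans (by norm_num) hL
  have hLL : Real.log (Real.log n) ≤ Real.log n / 10 := log_le_tenth hL400
  have hθ : 5 * Real.log (Real.log n) / Real.log n ≤ 1/2 := by
    rw [div_le_iff₀ hLpos]; linarith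
  have h1θ : (0:ℝ) < 1 - 5 * Real.log (Real.log n) / Real.log n := by linarith
  have heps_pos : (0:ℝ) < Real.log n ^ (-(2:ℝ)/5) := Real.rpow_pos_of_pos hLpos _
  have hN : 0 < n.choose 2 := Nat.choose_pos hn2
  have hcardE : Fintype.card (EdgeKn n) = n.choose 2 := by
    rw [Sym2.card_subtype_not_diag, Fintype.card_fin]
  have hΩne : Nonempty (EOrd n) := ⟨(Fintype.equivFinOfCardEq hcardE).symm⟩
  have hΩpos : 0 < Fintype.card (EOrd n) := Fintype.card_pos
  have incl : (univ.filter (fun ω : EOrd n => ¬ (∀ m : ℕ, mInRange n m →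
          ∀ a : ℝ, (1 / 1000 : ℝ) ≤ a → a ≤ m / (2 * n * Real.log n) →
            ∀ A : Finset (Fin (n.choose 2)),
              (∀ i ∈ A, (i : ℕ) < m) →
              a * n * Real.log n ≤ A.card →
                Real.sqrt (2 * a * (1 - 5 * Real.log (Real.log n) / Real.log n) /
                    (1 + Real.log n ^ (-(2 : ℝ) / 5))) * n ≤
                  Set.ncard {v : Fin n | ∃ i ∈ A, v ∈ (ω i).1})))
      ⊆ (univ : Finset (Finset (Fin n))).biUnion (fun S => Bad n S) := by
    intro ω hω
    rw [Finset.mem_filter] at hω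
    have hQ := hω.2
    push_neg at hQ
    obtain ⟨m, hm, a, ha1, -, A, hA1, hA2, hlt⟩ := hQ
    rw [Finset.mem_biUnion]
    refine ⟨univ.filter (fun v : Fin n => ∃ i ∈ A, v ∈ (ω i).1), mem_univ _, ?_⟩
    unfold Bad
    rw [Finset.mem_filter]
    refine ⟨mem_univ _, ?_⟩
    set SS := univ.filter (fun v : Fin n => ∃ i ∈ A, v ∈ (ω i).1) with hSS
    have hncard : Set.ncard {v : Fin n | ∃ i ∈ A, v ∈ (ω i).1} = SS.card := by
      rw [show {v : Fin n | ∃ i ∈ A, v ∈ (ω i).1} = (SS : Set (Fin n)) by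
        ext v; simp [hSS]]
      exact Set.ncard_coe_finset _
    rw [hncard] at hlt
    have hmM : m ≤ MM n := Nat.le_floor hm.2
    have hcard : A.card ≤ Xcnt n (MM n) (edgesIn n SS) ω := by
      unfold Xcnt
      apply Finset.card_le_card_of_injOn (fun i => ω i)
      · intro i hi
        rw [Finset.mem_coe, Finset.mem_filter]
        constructor
        · unfold edgesIn
          rw [Finset.mem_filter]
          refine ⟨mem_univ _, ?_⟩
          intro v hv
          rw [hSS, Finset.mem_filter]
          exact ⟨mem_univ _, ⟨i, hi, hv⟩⟩
        · simp only [Equiv.symm_apply_apply]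
          exact lt_of_lt_of_le (hA1 i hi) hmM
      · intro i _ j _ h
        exact ω.injective h
    have hXge : a * n * Real.log n ≤ (Xcnt n (MM n) (edgesIn n SS) ω : ℝ) :=
      le_trans hA2 (Nat.cast_le.mpr hcard)
    have harg : 0 ≤ 2 * a * (1 - 5 * Real.log (Real.log n) / Real.log n) /
        (1 + Real.log n ^ (-(2:ℝ)/5)) := by
      apply div_nonneg _ (by linarith)
      exact mul_nonneg (by linarith) h1θ.le
    have hs2 : ((SS.card:ℝ))^2 < 2 * a * (1 - 5 * Real.log (Real.log n) / Real.log n) /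
        (1 + Real.log n ^ (-(2:ℝ)/5)) * (n:ℝ)^2 := by
      have h0 : (0:ℝ) ≤ (SS.card:ℝ) := Nat.cast_nonneg _
      have h4 : (Real.sqrt (2 * a * (1 - 5 * Real.log (Real.log n) / Real.log n) /
          (1 + Real.log n ^ (-(2:ℝ)/5))) * n) *
          (Real.sqrt (2 * a * (1 - 5 * Real.log (Real.log n) / Real.log n) /
          (1 + Real.log n ^ (-(2:ℝ)/5))) * n)
          = 2 * a * (1 - 5 * Real.log (Real.log n) / Real.log n) /
            (1 + Real.log n ^ (-(2:ℝ)/5)) * (n:ℝ)^2 := by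
        have hss := Real.mul_self_sqrt harg
        linear_combination ((n:ℝ)^2) * hss
      have h2 := mul_lt_mul'' hlt hlt h0 h0
      rw [h4] at h2
      calc ((SS.card:ℝ))^2 = (SS.card:ℝ) * (SS.card:ℝ) := pow_two _
        _ < _ := h2
    unfold rS
    apply max_le
    · refine le_trans ?_ hXge
      nlinarith [mul_nonneg (mul_nonneg (sub_nonneg.mpr ha1) hn0.le) hLpos.le]
    · have hc : (0:ℝ) < 2 * (n:ℝ) * (1 - 5 * Real.log (Real.log n) / Real.log n) :=
        mul_pos (by linarith) h1θ
      have h6 : ((SS.card:ℝ))^2 * (1 + Real.log n ^ (-(2:ℝ)/5)) <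
          2 * a * (1 - 5 * Real.log (Real.log n) / Real.log n) * (n:ℝ)^2 := by
        rw [div_mul_eq_mul_div,
          lt_div_iff₀ (by linarith : (0:ℝ) < 1 + Real.log n ^ (-(2:ℝ)/5))] at hs2
        linarith
      refine le_trans (le_of_lt ?_) hXge
      rw [div_lt_iff₀ hc]
      nlinarith [mul_lt_mul_of_pos_right h6 hLpos]
  have count : ((univ.filter (fun ω : EOrd n => ¬ (∀ m : ℕ, mInRange n m →
          ∀ a : ℝ, (1 / 1000 : ℝ) ≤ a → a ≤ m / (2 * n * Real.log n) →
            ∀ A : Finset (Fin (n.choose 2)),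
              (∀ i ∈ A, (i : ℕ) < m) →
              a * n * Real.log n ≤ A.card →
                Real.sqrt (2 * a * (1 - 5 * Real.log (Real.log n) / Real.log n) /
                    (1 + Real.log n ^ (-(2 : ℝ) / 5))) * n ≤
                  Set.ncard {v : Fin n | ∃ i ∈ A, v ∈ (ω i).1}))).card : ℝ)
      ≤ (Fintype.card (EOrd n) : ℝ) * Real.exp (-(n:ℝ)) := by
    have h1 : (univ.filter (fun ω : EOrd n => ¬ (∀ m : ℕ, mInRange n m →
          ∀ a : ℝ, (1 / 1000 : ℝ) ≤ a → a ≤ m / (2 * n * Real.log n) →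
            ∀ A : Finset (Fin (n.choose 2)),
              (∀ i ∈ A, (i : ℕ) < m) →
              a * n * Real.log n ≤ A.card →
                Real.sqrt (2 * a * (1 - 5 * Real.log (Real.log n) / Real.log n) /
                    (1 + Real.log n ^ (-(2 : ℝ) / 5))) * n ≤
                  Set.ncard {v : Fin n | ∃ i ∈ A, v ∈ (ω i).1}))).card ≤
        ∑ S ∈ (univ : Finset (Finset (Fin n))), (Bad n S).card :=
      le_trans (Finset.card_le_card incl) (Finset.card_biUnion_le)
    have h2 : ((univ.filter (fun ω : EOrd n => ¬ (∀ m : ℕ, mInRange n m →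
          ∀ a : ℝ, (1 / 1000 : ℝ) ≤ a → a ≤ m / (2 * n * Real.log n) →
            ∀ A : Finset (Fin (n.choose 2)),
              (∀ i ∈ A, (i : ℕ) < m) →
              a * n * Real.log n ≤ A.card →
                Real.sqrt (2 * a * (1 - 5 * Real.log (Real.log n) / Real.log n) /
                    (1 + Real.log n ^ (-(2 : ℝ) / 5))) * n ≤
                  Set.ncard {v : Fin n | ∃ i ∈ A, v ∈ (ω i).1}))).card : ℝ) ≤
        ∑ S ∈ (univ : Finset (Finset (Fin n))), ((Bad n S).card : ℝ) := by
      rw [← Nat.cast_sum]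
      exact Nat.cast_le.mpr h1
    refine le_trans h2 ?_
    have h3 : ∑ S ∈ (univ : Finset (Finset (Fin n))), ((Bad n S).card : ℝ)
        ≤ ∑ _S ∈ (univ : Finset (Finset (Fin n))),
            ((Fintype.card (EOrd n) : ℝ) * Real.exp (-(n:ℝ) * Real.log 2 - n)) :=
      Finset.sum_le_sum (fun S _ => perS n hn hL S)
    refine le_trans h3 ?_
    rw [Finset.sum_const, Finset.card_univ, Fintype.card_finset, Fintype.card_fin,
      nsmul_eq_mul]
    have e5 : Real.exp ((n:ℝ) * Real.log 2) = 2^n := by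
      rw [Real.exp_nat_mul, Real.exp_log (by norm_num : (0:ℝ) < 2)]
    have e6 : ((2^n : ℕ) : ℝ) = (2:ℝ)^n := by push_cast; ring
    rw [e6]
    have e7 : (2:ℝ)^n * Real.exp (-(n:ℝ) * Real.log 2 - n) = Real.exp (-(n:ℝ)) := by
      rw [show -(n:ℝ) * Real.log 2 - n = -((n:ℝ) * Real.log 2) + -(n:ℝ) by ring,
        Real.exp_add, Real.exp_neg, e5]
      have h2n : ((2:ℝ)^n) ≠ 0 := by positivity
      field_simp
    apply le_of_eq
    rw [← e7]
    ring
  have hsplit := Finset.card_filter_add_card_filter_not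
    (s := (univ : Finset (EOrd n))) (p := fun ω : EOrd n => (∀ m : ℕ, mInRange n m →
          ∀ a : ℝ, (1 / 1000 : ℝ) ≤ a → a ≤ m / (2 * n * Real.log n) →
            ∀ A : Finset (Fin (n.choose 2)),
              (∀ i ∈ A, (i : ℕ) < m) →
              a * n * Real.log n ≤ A.card →
                Real.sqrt (2 * a * (1 - 5 * Real.log (Real.log n) / Real.log n) /
                    (1 + Real.log n ^ (-(2 : ℝ) / 5))) * n ≤
                  Set.ncard {v : Fin n | ∃ i ∈ A, v ∈ (ω i).1}))
  rw [Finset.card_univ] at hsplit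
  unfold prob
  rw [le_div_iff₀ (show (0:ℝ) < (Fintype.card (EOrd n) : ℝ) by exact_mod_cast hΩpos)]
  have hcR := congrArg (fun k : ℕ => (k : ℝ)) hsplit
  push_cast at hcR
  nlinarith [count, hcR, Real.exp_pos (-(n:ℝ))]


/-- **Lemma 4(a).** With `ε = (log n)^{-2/5}` and `θ₀ = 5 log log n / log n`, w.h.p.,
simultaneously for all `m` in the connectivity window, all reals `a` with
`(1 / 1000 : ℝ) ≤ a ≤ m/(2n log n)`, and all sets `A` of edges of `G_m` with `|A| ≥ a n log n`,
at least `(2a(1 − θ₀)/(1 + ε))^{1/2}·n` vertices are incident to an edge of `A`. -/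
theorem many_vertices_covered :
    Filter.Tendsto
      (fun n : ℕ =>
        prob (Ω := EOrd n) (fun ω =>
          ∀ m : ℕ, mInRange n m →
            ∀ a : ℝ, (1 / 1000 : ℝ) ≤ a → a ≤ m / (2 * n * Real.log n) →
              ∀ A : Finset (Fin (n.choose 2)),
                (∀ i ∈ A, (i : ℕ) < m) →
                a * n * Real.log n ≤ A.card →
                  Real.sqrt (2 * a * (1 - 5 * Real.log (Real.log n) / Real.log n) /
                      (1 + Real.log n ^ (-(2 : ℝ) / 5))) * n ≤
                    Set.ncard {v : Fin n | ∃ i ∈ A, v ∈ (ω i).1}))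
      Filter.atTop (nhds 1) := by
  have hlower : ∀ᶠ (n : ℕ) in Filter.atTop, 1 - Real.exp (-(n:ℝ)) ≤
      prob (Ω := EOrd n) (fun ω =>
        ∀ m : ℕ, mInRange n m →
          ∀ a : ℝ, (1 / 1000 : ℝ) ≤ a → a ≤ m / (2 * n * Real.log n) →
            ∀ A : Finset (Fin (n.choose 2)),
              (∀ i ∈ A, (i : ℕ) < m) →
              a * n * Real.log n ≤ A.card →
                Real.sqrt (2 * a * (1 - 5 * Real.log (Real.log n) / Real.log n) /
                    (1 + Real.log n ^ (-(2 : ℝ) / 5))) * n ≤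
                  Set.ncard {v : Fin n | ∃ i ∈ A, v ∈ (ω i).1}) := by
    filter_upwards [Filter.eventually_ge_atTop 64,
      (Real.tendsto_log_atTop.comp tendsto_natCast_atTop_atTop).eventually_ge_atTop
        ((96000:ℝ)^5)] with n hn hL
    exact main_lb n hn hL
  have h1 : Filter.Tendsto (fun n : ℕ => 1 - Real.exp (-(n:ℝ))) Filter.atTop (nhds 1) := by
    have h2 : Filter.Tendsto (fun n : ℕ => Real.exp (-(n:ℝ))) Filter.atTop (nhds 0) :=
      Real.tendsto_exp_neg_atTop_nhds_zero.comp tendsto_natCast_atTop_atTop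
    simpa using tendsto_const_nhds.sub h2
  exact tendsto_of_tendsto_of_tendsto_of_le_of_le' h1 tendsto_const_nhds hlower
    (Filter.Eventually.of_forall (fun n => prob_le_one _))
end Aux2
end
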